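/- arXiv:1808.08747 — 4 statements merged into one kernel-verified Lean document; each statement's English description precedes it below -/
import Mathlib

section
/- Let C be an Hadamard full propelinear code of length n. Then the all-one vector u lies in the kernel K(C), and the map φ : (C,*) → Sym(n) given by φ(x) = π_x is a group homomorphism whose kernel is {e, u}; consequently the associated group Π = {π_x : x ∈ C} is isomorphic to the quotient group C/⟨u⟩. -/
open Finset

abbrev Vec (n : ℕ) := Fin n → ZMod 2

def allOne (n : ℕ) : Vec n := fun _ => 1

def permAct {n : ℕ} (σ : Equiv.Perm (Fin n)) (x : Vec n) : Vec n := fun i => x (σ⁻¹ i)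

/-- An Hadamard full propelinear code of length `n`:
an Hadamard code together with a full propelinear structure. -/
structure HFPCode (n : ℕ) where
  C : Set (Vec n)
  π : Vec n → Equiv.Perm (Fin n)
  zero_mem : (0 : Vec n) ∈ C
  card_eq : C.ncard = 2 * n
  allOne_mem : allOne n ∈ C
  add_allOne_mem : ∀ x ∈ C, x + allOne n ∈ C
  dist_eq : ∀ x ∈ C, ∀ y ∈ C, x ≠ y → y ≠ x + allOne n → 2 * hammingDist x y = n
  mul_mem : ∀ x ∈ C, ∀ y ∈ C, x + permAct (π x) y ∈ C
  π_mul : ∀ x ∈ C, ∀ y ∈ C, π (x + permAct (π x) y) = π x * π y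
  π_zero : π 0 = 1
  π_allOne : π (allOne n) = 1
  π_fixedfree : ∀ x ∈ C, x ≠ 0 → x ≠ allOne n → ∀ i, π x i ≠ i

namespace HFPCode

variable {n : ℕ} (H : HFPCode n)

/-- The propelinear group operation `x * y = x + π_x(y)`. -/
def mul (x y : Vec n) : Vec n := x + permAct (H.π x) y

/-- `*`-powers: `x^0 = e`, `x^(i+1) = x * x^i`. -/
def pow (x : Vec n) : ℕ → Vec n
  | 0 => 0
  | i + 1 => H.mul x (pow x i)

end HFPCode

/-- The kernel `K(C) = {z : z + C = C}`. -/
def kerSet {n : ℕ} (C : Set (Vec n)) : Set (Vec n) := {z | (fun x => z + x) '' C = C}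

/-- Dimension of the kernel of a code. -/
noncomputable def kerDim {n : ℕ} (C : Set (Vec n)) : ℕ :=
  Module.finrank (ZMod 2) (Submodule.span (ZMod 2) (kerSet C))

/-- The rank of a code: dimension of its linear span. -/
noncomputable def rankOf {n : ℕ} (C : Set (Vec n)) : ℕ :=
  Module.finrank (ZMod 2) (Submodule.span (ZMod 2) C)

namespace HFPCode

variable {n : ℕ} (H : HFPCode n)

lemma permAct_mul (σ τ : Equiv.Perm (Fin n)) (x : Vec n) :
    permAct (σ * τ) x = permAct σ (permAct τ x) := by
  funext i
  simp [permAct, mul_inv_rev, Equiv.Perm.mul_apply]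

lemma permAct_one (x : Vec n) : permAct (1 : Equiv.Perm (Fin n)) x = x := rfl

lemma permAct_add (σ : Equiv.Perm (Fin n)) (x y : Vec n) :
    permAct σ (x + y) = permAct σ x + permAct σ y := rfl

lemma permAct_zero (σ : Equiv.Perm (Fin n)) : permAct σ (0 : Vec n) = 0 := rfl

lemma permAct_inj (σ : Equiv.Perm (Fin n)) {x y : Vec n}
    (h : permAct σ x = permAct σ y) : x = y := by
  funext i
  have := congrFun h (σ i)
  simpa [permAct] using this

lemma add_self (x : Vec n) : x + x = 0 := by
  funext i
  have : ∀ a : ZMod 2, a + a = 0 := by decide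
  exact this (x i)

/-- The code `C` as a type, to be endowed with the group structure `(C, *)`. -/
def grp : Type := {x : Vec n // x ∈ H.C}

lemma mul_assoc' {x y z : Vec n} (hx : x ∈ H.C) (hy : y ∈ H.C) :
    H.mul (H.mul x y) z = H.mul x (H.mul y z) := by
  unfold HFPCode.mul
  rw [H.π_mul x hx y hy, permAct_mul, permAct_add, add_assoc]

lemma inv_mem {x : Vec n} (hx : x ∈ H.C) : permAct (H.π x)⁻¹ x ∈ H.C := by
  have hmaps : Set.MapsTo (H.mul x) H.C H.C := fun y hy => H.mul_mem x hx y hy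
  have hinj : Set.InjOn (H.mul x) H.C := by
    intro y hy z hz h
    have h2 : permAct (H.π x) y = permAct (H.π x) z := by
      have := add_left_cancel (a := x) h
      simpa [HFPCode.mul] using this
    exact permAct_inj _ h2
  have hbij : Set.BijOn (H.mul x) H.C H.C :=
    (Set.Finite.injOn_iff_bijOn_of_mapsTo (Set.toFinite H.C) hmaps).mp hinj
  obtain ⟨y, hy, hxy⟩ := hbij.surjOn H.zero_mem
  have h3 : permAct (H.π x) y = x := by
    have h4 : x + permAct (H.π x) y = 0 := hxy
    have := congrArg (fun w => x + w) h4
    simpa [← add_assoc, add_self] using this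
  have : y = permAct (H.π x)⁻¹ x := by
    apply permAct_inj (H.π x)
    rw [h3, ← permAct_mul, mul_inv_cancel, permAct_one]
  rwa [← this]

lemma mul_inv_self {x : Vec n} : H.mul x (permAct (H.π x)⁻¹ x) = 0 := by
  unfold HFPCode.mul
  rw [← permAct_mul, mul_inv_cancel, permAct_one, add_self]

lemma π_inv {x : Vec n} (hx : x ∈ H.C) : H.π (permAct (H.π x)⁻¹ x) = (H.π x)⁻¹ := by
  have h := H.π_mul x hx _ (H.inv_mem hx)
  have h2 : x + permAct (H.π x) (permAct (H.π x)⁻¹ x) = 0 := H.mul_inv_self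
  rw [h2, H.π_zero] at h
  exact eq_inv_of_mul_eq_one_right h.symm

instance : Group H.grp where
  mul x y := ⟨H.mul x.1 y.1, H.mul_mem x.1 x.2 y.1 y.2⟩
  one := ⟨0, H.zero_mem⟩
  inv x := ⟨permAct (H.π x.1)⁻¹ x.1, H.inv_mem x.2⟩
  mul_assoc x y z := Subtype.ext (H.mul_assoc' x.2 y.2)
  one_mul x := Subtype.ext (show H.mul 0 x.1 = x.1 by simp [HFPCode.mul, H.π_zero, permAct_one])
  mul_one x := Subtype.ext (show H.mul x.1 0 = x.1 by simp [HFPCode.mul, permAct_zero])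
  inv_mul_cancel x := Subtype.ext (by
    show H.mul (permAct (H.π x.1)⁻¹ x.1) x.1 = 0
    unfold HFPCode.mul
    rw [H.π_inv x.2, add_self])

/-- The all-one vector as an element of the group `(C,*)`. -/
def uElem : H.grp := ⟨allOne n, H.allOne_mem⟩

/-- The homomorphism `x ↦ π_x` from `(C,*)` to the symmetric group. -/
def toPerm : H.grp →* Equiv.Perm (Fin n) where
  toFun x := H.π x.1
  map_one' := H.π_zero
  map_mul' x y := H.π_mul x.1 x.2 y.1 y.2

/-- The associated group `Π = {π_x : x ∈ C}`. -/
def assocGroup : Subgroup (Equiv.Perm (Fin n)) := H.toPerm.range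

lemma uElem_central (x : H.grp) : x * H.uElem = H.uElem * x := by
  apply Subtype.ext
  show H.mul x.1 (allOne n) = H.mul (allOne n) x.1
  unfold HFPCode.mul
  rw [H.π_allOne, permAct_one]
  have : permAct (H.π x.1) (allOne n) = allOne n := rfl
  rw [this, add_comm]

instance : (Subgroup.zpowers H.uElem).Normal := by
  constructor
  intro g hg h
  obtain ⟨k, hk⟩ := hg
  have hcentral : ∀ x : H.grp, x * g = g * x := by
    intro x
    have hu : H.uElem ∈ Subgroup.center H.grp := by
      rw [Subgroup.mem_center_iff]
      intro y
      exact H.uElem_central y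
    have hgc : g ∈ Subgroup.center H.grp := by
      rw [← hk]
      exact Subgroup.zpow_mem _ hu k
    exact ((Subgroup.mem_center_iff.mp hgc) x)
  have : h * g * h⁻¹ = g := by
    rw [hcentral h, mul_assoc, mul_inv_cancel, mul_one]
  rw [this]
  exact ⟨k, hk⟩

end HFPCode

/-- For an HFP code `C` of length `n`: the all-one vector `u` lies in the kernel `K(C)`,
the map `x ↦ π_x` is a group homomorphism `(C,*) → Sym(n)` whose kernel is
`⟨u⟩ = {e, u}`, and consequently the associated group `Π` is isomorphic to `C/⟨u⟩`. -/
theorem allOne_mem_kerSet_and_assocGroup_iso (n : ℕ) (H : HFPCode n) :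
    allOne n ∈ kerSet H.C ∧
    (∀ x ∈ H.C, ∀ y ∈ H.C, H.π (H.mul x y) = H.π x * H.π y) ∧
    (∀ x ∈ H.C, (H.π x = 1 ↔ x = 0 ∨ x = allOne n)) ∧
    H.toPerm.ker = Subgroup.zpowers H.uElem ∧
    Nonempty ((H.grp ⧸ Subgroup.zpowers H.uElem) ≃* H.assocGroup) := by
  have hn : 0 < n := by
    by_contra h
    have hn0 : n = 0 := Nat.le_zero.mp (Nat.not_lt.mp h)
    have : H.C.ncard ≠ 0 := by
      have : H.C.Nonempty := ⟨0, H.zero_mem⟩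
      exact Set.ncard_ne_zero_of_mem H.zero_mem (Set.toFinite _)
    rw [H.card_eq, hn0] at this
    exact this rfl
  have hker : ∀ x ∈ H.C, (H.π x = 1 ↔ x = 0 ∨ x = allOne n) := by
    intro x hx
    constructor
    · intro h1
      by_contra hc
      push_neg at hc
      have := H.π_fixedfree x hx hc.1 hc.2 ⟨0, hn⟩
      rw [h1] at this
      exact this rfl
    · rintro (rfl | rfl)
      · exact H.π_zero
      · exact H.π_allOne
  refine ⟨?_, ?_, hker, ?_, ?_⟩
  · -- allOne ∈ kerSet
    apply Set.Subset.antisymm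
    · rintro _ ⟨x, hx, rfl⟩
      have := H.add_allOne_mem x hx
      show allOne n + x ∈ H.C
      rwa [add_comm] at this
    · intro x hx
      refine ⟨x + allOne n, H.add_allOne_mem x hx, ?_⟩
      funext i
      show allOne n i + (x i + allOne n i) = x i
      have : ∀ a b : ZMod 2, a + (b + a) = b := by decide
      exact this _ _
  · intro x hx y hy
    exact H.π_mul x hx y hy
  · -- ker = zpowers uElem
    have hu_ker : H.uElem ∈ H.toPerm.ker := by
      rw [MonoidHom.mem_ker]
      exact H.π_allOne
    apply le_antisymm
    · intro x hxk
      rw [MonoidHom.mem_ker] at hxk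
      rcases (hker x.1 x.2).mp hxk with h | h
      · have : x = 1 := Subtype.ext h
        rw [this]; exact Subgroup.one_mem _
      · have : x = H.uElem := Subtype.ext h
        rw [this]; exact Subgroup.mem_zpowers _
    · exact Subgroup.zpowers_le.mpr hu_ker
  · -- iso
    have hu_ker : H.uElem ∈ H.toPerm.ker := by
      rw [MonoidHom.mem_ker]; exact H.π_allOne
    have hkereq : H.toPerm.ker = Subgroup.zpowers H.uElem := by
      apply le_antisymm
      · intro x hxk
        rw [MonoidHom.mem_ker] at hxk
        rcases (hker x.1 x.2).mp hxk with h | h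
        · have hx1 : x = 1 := Subtype.ext h
          rw [hx1]; exact Subgroup.one_mem _
        · have hxu : x = H.uElem := Subtype.ext h
          rw [hxu]; exact Subgroup.mem_zpowers _
      · exact Subgroup.zpowers_le.mpr hu_ker
    exact ⟨(QuotientGroup.quotientMulEquivOfEq hkereq.symm).trans
      (QuotientGroup.quotientKerEquivRange H.toPerm)⟩
end

section
/- Let C be a nonlinear HFP(4t_u,2)-code of length 4t where t is a power of two. Then the rank of C (the dimension of the F_2-linear span of C) equals 2t. -/
open Finset

namespace HFPCode

/-- `C` is an `HFP(4t_u,2)`-code with generators `a`, `b`: `(C,*)` is an abelian group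
of order `8t` generated by `a` of order `4t` with `a^{2t} = u` and `b` of order `2`
with `b ∉ ⟨a⟩`, so `(C,*) ≅ C_{4t} × C_2`. -/
def Is4tu2 (t : ℕ) (H : HFPCode (4 * t)) (a b : Vec (4 * t)) : Prop :=
  a ∈ H.C ∧ b ∈ H.C ∧
  (∀ x ∈ H.C, ∀ y ∈ H.C, H.mul x y = H.mul y x) ∧
  H.pow a (4 * t) = 0 ∧ (∀ j : ℕ, 0 < j → j < 4 * t → H.pow a j ≠ 0) ∧
  H.pow a (2 * t) = allOne (4 * t) ∧
  H.pow b 2 = 0 ∧ b ≠ 0 ∧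
  (∀ i : ℕ, b ≠ H.pow a i) ∧
  (∀ x ∈ H.C, ∃ i j : ℕ, x = H.mul (H.pow a i) (H.pow b j))

/-- `C` is an `HFP(2t,2,2_u)`-code with generators `a`, `b` (and `u`): `(C,*)` is an
abelian group of order `8t` which is the internal direct product `⟨a⟩ × ⟨b⟩ × ⟨u⟩`
with `a` of order `2t` and `b` of order `2`, so `(C,*) ≅ C_{2t} × C_2 × C_2`. -/
def Is2t22u (t : ℕ) (H : HFPCode (4 * t)) (a b : Vec (4 * t)) : Prop :=
  a ∈ H.C ∧ b ∈ H.C ∧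
  (∀ x ∈ H.C, ∀ y ∈ H.C, H.mul x y = H.mul y x) ∧
  H.pow a (2 * t) = 0 ∧ (∀ j : ℕ, 0 < j → j < 2 * t → H.pow a j ≠ 0) ∧
  H.pow b 2 = 0 ∧ b ≠ 0 ∧ allOne (4 * t) ≠ 0 ∧
  (∀ i j k : ℕ, i < 2 * t → j < 2 → k < 2 →
    H.mul (H.mul (H.pow a i) (H.pow b j)) (H.pow (allOne (4 * t)) k) = 0 →
      i = 0 ∧ j = 0 ∧ k = 0) ∧
  (∀ x ∈ H.C, ∃ i j k : ℕ,
    x = H.mul (H.mul (H.pow a i) (H.pow b j)) (H.pow (allOne (4 * t)) k))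

/-- `C` is an `HFP(2t,4_u)`-code with generators `a`, `b`: `(C,*)` is an abelian group
of order `8t` which is the internal direct product `⟨a⟩ × ⟨b⟩` with `a` of order `2t`,
`b` of order `4` and `b² = u`, so `(C,*) ≅ C_{2t} × C_4`. -/
def Is2t4u (t : ℕ) (H : HFPCode (4 * t)) (a b : Vec (4 * t)) : Prop :=
  a ∈ H.C ∧ b ∈ H.C ∧
  (∀ x ∈ H.C, ∀ y ∈ H.C, H.mul x y = H.mul y x) ∧
  H.pow a (2 * t) = 0 ∧ (∀ j : ℕ, 0 < j → j < 2 * t → H.pow a j ≠ 0) ∧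
  H.pow b 4 = 0 ∧ (∀ j : ℕ, 0 < j → j < 4 → H.pow b j ≠ 0) ∧
  H.pow b 2 = allOne (4 * t) ∧
  (∀ i j : ℕ, i < 2 * t → j < 4 → H.mul (H.pow a i) (H.pow b j) = 0 → i = 0 ∧ j = 0) ∧
  (∀ x ∈ H.C, ∃ i j : ℕ, x = H.mul (H.pow a i) (H.pow b j))

/-- The permutation associated to `a` is normalized to
`(1,2,…,2t)(2t+1,…,4t)` (0-indexed here). -/
def NormPiA (t : ℕ) (H : HFPCode (4 * t)) (a : Vec (4 * t)) : Prop :=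
  ∀ i : Fin (4 * t), ((H.π a) i).val =
    if i.val < 2 * t then (i.val + 1) % (2 * t) else 2 * t + (i.val + 1) % (2 * t)

/-- The permutation associated to `b` is normalized to
`(1,2t+1)(2,2t+2)⋯(2t,4t)` (0-indexed here). -/
def NormPiB (t : ℕ) (H : HFPCode (4 * t)) (b : Vec (4 * t)) : Prop :=
  ∀ i : Fin (4 * t), ((H.π b) i).val = (i.val + 2 * t) % (4 * t)

end HFPCode

/-- The vector `(e_{2t}, u_{2t})`: `0` on the first half, `1` on the second half. -/
def euVec (t : ℕ) : Vec (4 * t) := fun i => if i.val < 2 * t then 0 else 1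

/-- The vector `ω_{4t} = (1,0,1,0,…,1,0)`. -/
def omegaVec (t : ℕ) : Vec (4 * t) := fun i => if i.val % 2 = 0 then 1 else 0

/-- The vector `(ω_{2t}, ω_{2t} + u_{2t})`. -/
def omegaCompVec (t : ℕ) : Vec (4 * t) := fun i =>
  if i.val < 2 * t then (if i.val % 2 = 0 then 1 else 0)
  else (if i.val % 2 = 0 then 0 else 1)

/-- `C` is linear if it is an `F₂`-subspace, i.e. coincides with its linear span. -/
def IsLinearCode {n : ℕ} (C : Set (Vec n)) : Prop :=
  C = (Submodule.span (ZMod 2) C : Set (Vec n))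

namespace RankAux
open Polynomial

variable {n : ℕ}

/-- `permAct` as a linear map. -/
def PL (σ : Equiv.Perm (Fin n)) : Vec n →ₗ[ZMod 2] Vec n where
  toFun := permAct σ
  map_add' := fun _ _ => rfl
  map_smul' := fun _ _ => rfl

lemma PL_allOne (σ : Equiv.Perm (Fin n)) : PL σ (allOne n) = allOne n := rfl

lemma PL_pow_allOne (σ : Equiv.Perm (Fin n)) (k : ℕ) :
    ((PL σ) ^ k) (allOne n) = allOne n := by
  induction k with
  | zero => rfl
  | succ k ih => rw [pow_succ, Module.End.mul_apply, PL_allOne, ih]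

lemma aeval_PL_allOne (σ : Equiv.Perm (Fin n)) (χ : Polynomial (ZMod 2)) :
    (Polynomial.aeval (PL σ) χ) (allOne n) = (χ.eval 1) • allOne n := by
  induction χ using Polynomial.induction_on' with
  | add p q hp hq =>
      rw [map_add, LinearMap.add_apply, hp, hq, eval_add, add_smul]
  | monomial k c =>
      rw [aeval_monomial, eval_monomial, one_pow, Module.End.mul_apply,
        PL_pow_allOne, Algebra.algebraMap_eq_smul_one, LinearMap.smul_apply,
        Module.End.one_apply, mul_one]

/-- The polynomial identity `(X-1)^(2^m - 1) = 1 + X + ... + X^(2^m - 1)` over `F₂`. -/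
lemma pol_id (m : ℕ) :
    ((X - C 1 : Polynomial (ZMod 2))) ^ (2 ^ m - 1) = ∑ k ∈ range (2 ^ m), X ^ k := by
  have hXC : (X - C 1 : Polynomial (ZMod 2)) = X + 1 := by
    have h2 : (C 1 : Polynomial (ZMod 2)) + C 1 = 0 := by
      rw [← C_add]
      norm_num
      rfl
    rw [sub_eq_add_neg, neg_eq_of_add_eq_zero_right h2, map_one]
  rw [hXC]
  induction m with
  | zero => simp
  | succ m ih =>
      have h1 : (1:ℕ) ≤ 2 ^ m := Nat.one_le_two_pow
      have hsplit : 2 ^ (m+1) - 1 = 2 ^ m + (2 ^ m - 1) := by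
        rw [pow_succ]; omega
      have hfr : ((X + 1 : Polynomial (ZMod 2))) ^ (2 ^ m) = X ^ (2 ^ m) + 1 := by
        have := add_pow_char_pow (R := Polynomial (ZMod 2)) X 1 2 m
        simpa using this
      rw [hsplit, pow_add, hfr, ih, add_mul, one_mul, Finset.mul_sum]
      have : ∀ k, (X:Polynomial (ZMod 2)) ^ (2^m) * X ^ k = X ^ (2 ^ m + k) := by
        intro k; rw [← pow_add]
      simp_rw [this]
      have hle : 2 ^ m ≤ 2 ^ (m+1) := by rw [pow_succ]; omega
      have hsum : (range (2 ^ (m+1))).sum (fun k => (X:Polynomial (ZMod 2)) ^ k)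
          = (range (2^m)).sum (fun k => (X:Polynomial (ZMod 2)) ^ k)
            + ∑ k ∈ range (2^m), (X:Polynomial (ZMod 2)) ^ (2 ^ m + k) := by
        conv_lhs => rw [Finset.range_eq_Ico]
        rw [← Finset.sum_Ico_consecutive
          (fun k => (X:Polynomial (ZMod 2)) ^ k) (Nat.zero_le (2^m)) hle]
        congr 1
        · rw [← Finset.range_eq_Ico]
        · rw [Finset.sum_Ico_eq_sum_range,
            show 2 ^ (m+1) - 2 ^ m = 2 ^ m from by rw [pow_succ]; omega]
      rw [hsum, add_comm]

end RankAux

namespace RankAux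
open Polynomial

variable {n : ℕ}

def wtF (x : Vec n) : ℕ := (univ.filter fun i => x i = 1).card

def interF (x y : Vec n) : ℕ := (univ.filter fun i => x i = 1 ∧ y i = 1).card

lemma zmod2_ne_iff : ∀ v : ZMod 2, v ≠ 0 ↔ v = 1 := by decide

lemma hamming_zero_eq_wt (x : Vec n) : hammingDist x 0 = wtF x := by
  unfold wtF
  rw [show hammingDist x 0 = (univ.filter fun i => x i ≠ (0:Vec n) i).card from rfl]
  congr 1
  apply Finset.filter_congr
  intro i _
  simpa using zmod2_ne_iff (x i)

lemma wt_allOne : wtF (allOne n) = n := by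
  unfold wtF allOne
  simp

lemma key_count (x y : Vec n) :
    hammingDist x y + 2 * interF x y = wtF x + wtF y := by
  have hpt : ∀ v w : ZMod 2, ((if v ≠ w then 1 else 0) + 2 * (if v = 1 ∧ w = 1 then 1 else 0) : ℕ)
      = (if v = 1 then 1 else 0) + (if w = 1 then 1 else 0) := by decide
  rw [show hammingDist x y = (univ.filter fun i => x i ≠ y i).card from rfl]
  unfold interF wtF
  rw [Finset.card_filter, Finset.card_filter, Finset.card_filter, Finset.card_filter,
    Finset.mul_sum, ← Finset.sum_add_distrib, ← Finset.sum_add_distrib]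
  exact Finset.sum_congr rfl fun i _ => hpt (x i) (y i)

/-- The standard dot product as a linear map into the dual. -/
def dotL : Vec n →ₗ[ZMod 2] Module.Dual (ZMod 2) (Vec n) :=
  ∑ i : Fin n, LinearMap.smulRight (LinearMap.proj i) (LinearMap.proj i)

lemma dotL_apply (v w : Vec n) : dotL v w = ∑ i : Fin n, v i * w i := by
  unfold dotL
  rw [LinearMap.sum_apply, LinearMap.sum_apply]
  exact Finset.sum_congr rfl fun i _ => rfl

lemma dotL_inter (v w : Vec n) : dotL v w = (interF v w : ZMod 2) := by
  rw [dotL_apply]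
  have hpt : ∀ a b : ZMod 2, a * b = if a = 1 ∧ b = 1 then 1 else 0 := by decide
  unfold interF
  rw [← Finset.sum_boole]
  exact Finset.sum_congr rfl fun i _ => hpt (v i) (w i)

lemma vec_add_self (x : Vec n) : x + x = 0 := by
  funext i
  exact CharTwo.add_self_eq_zero (x i)

lemma dotL_comm (v w : Vec n) : dotL v w = dotL w v := by
  rw [dotL_apply, dotL_apply]
  exact Finset.sum_congr rfl fun i _ => mul_comm _ _

lemma dotL_wt (v : Vec n) : dotL v v = (wtF v : ZMod 2) := by
  rw [dotL_inter]
  unfold interF wtF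
  congr 2
  apply Finset.filter_congr
  intro i _
  simp

lemma dotL_allOne_right (v : Vec n) : dotL v (allOne n) = (wtF v : ZMod 2) := by
  rw [dotL_inter]
  unfold interF wtF
  congr 2
  apply Finset.filter_congr
  intro i _
  simp [allOne]

lemma dotL_self_add_allOne (v : Vec n) : dotL v (v + allOne n) = 0 := by
  rw [map_add, dotL_wt, dotL_allOne_right, CharTwo.add_self_eq_zero]

lemma dotL_injective : Function.Injective (dotL (n := n)) := by
  rw [← LinearMap.ker_eq_bot (M := Vec n)]
  rw [Submodule.eq_bot_iff]
  intro v hv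
  have h0 : dotL v = 0 := hv
  funext j
  have := congrArg (fun f => f ((Pi.single j (1:ZMod 2) : Vec n))) h0
  simp only [LinearMap.zero_apply] at this
  rw [dotL_apply] at this
  have hs : ∑ i : Fin n, v i * (Pi.single j (1:ZMod 2) : Vec n) i = v j := by
    rw [Finset.sum_eq_single j]
    · simp
    · intro i _ hij
      rw [Pi.single_apply, if_neg hij, mul_zero]
    · simp
  rw [hs] at this
  exact this

end RankAux

namespace RankAux
open Polynomial

open HFPCode

variable {n : ℕ} (H : HFPCode n)

lemma mulC (x y : Vec n) (hx : x ∈ H.C) (hy : y ∈ H.C) : H.mul x y ∈ H.C :=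
  H.mul_mem x hx y hy

lemma pow_mem (x : Vec n) (hx : x ∈ H.C) (m : ℕ) : H.pow x m ∈ H.C := by
  induction m with
  | zero => exact H.zero_mem
  | succ m ih => exact H.mul_mem x hx _ ih

lemma pow_eq_sum (x : Vec n) (m : ℕ) :
    H.pow x m = ∑ j ∈ Finset.range m, ((PL (H.π x)) ^ j) x := by
  induction m with
  | zero => simp [HFPCode.pow]
  | succ m ih =>
      have h0 : H.pow x (m+1) = x + PL (H.π x) (H.pow x m) := rfl
      rw [h0, ih, map_sum, Finset.sum_range_succ']
      have h1 : (PL (H.π x) ^ 0) x = x := rfl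
      rw [h1, add_comm]
      congr 1
      apply Finset.sum_congr rfl
      intro j _
      rw [pow_succ', Module.End.mul_apply]

end RankAux

open RankAux
set_option maxHeartbeats 1600000
/-- A nonlinear HFP(4t_u,2)-code of length `4t` with `t` a power of two
has rank `2t`. -/
theorem rank_eq_of_Is4tu2_pow_two (t : ℕ) (H : HFPCode (4 * t)) (a b : Vec (4 * t))
    (hC : HFPCode.Is4tu2 t H a b)
    (hnl : ¬ IsLinearCode H.C)
    (hpow : ∃ s : ℕ, t = 2 ^ s) :
    rankOf H.C = 2 * t := by
  classical
  obtain ⟨ha, hb, hcomm, ha4t, hordmin, ha2t, hb2, hbne0, hbnotpow, hgen⟩ := hC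
  obtain ⟨s, ht⟩ := hpow
  have htpos : 0 < t := by
    rw [ht]; exact Nat.pow_pos (by norm_num)
  have hnpos : 0 < 4 * t := by omega
  set W : Submodule (ZMod 2) (Vec (4 * t)) := Submodule.span (ZMod 2) H.C with hW
  have h0C : (0 : Vec (4 * t)) ∈ H.C := H.zero_mem
  have huC : allOne (4 * t) ∈ H.C := H.allOne_mem
  have hu_ne : allOne (4 * t) ≠ 0 := by
    intro h
    have := congrFun h ⟨0, hnpos⟩
    simp [allOne] at this
  have hcast2 : ((2 * t : ℕ) : ZMod 2) = 0 := by
    push_cast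
    rw [show (2 : ZMod 2) = 0 from rfl]
    ring
  have hcast4 : ((4 * t : ℕ) : ZMod 2) = 0 := by
    push_cast
    rw [show (4 : ZMod 2) = 0 from rfl]
    ring
  -- weights of codewords
  have hwt : ∀ x ∈ H.C, x ≠ 0 → x ≠ allOne (4 * t) → wtF x = 2 * t := by
    intro x hx hx0 hxu
    have hcond : (0 : Vec (4*t)) ≠ x + allOne (4*t) := by
      intro h
      apply hxu
      have h2 : x + allOne (4*t) + allOne (4*t) = 0 + allOne (4*t) := by rw [← h]
      rw [add_assoc, vec_add_self, add_zero, zero_add] at h2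
      exact h2
    have hd := H.dist_eq x hx 0 h0C hx0 hcond
    rw [hamming_zero_eq_wt] at hd
    omega
  have hwt0 : wtF (0 : Vec (4*t)) = 0 := by
    unfold wtF
    rw [Finset.card_eq_zero, Finset.filter_eq_empty_iff]
    intro i _
    simp
  -- lower bound: the 2t vectors (P^k) a are linearly independent and lie in W
  set P := PL (H.π a) with hP
  set v : Fin (2 * t) → Vec (4 * t) := fun k => (P ^ (k : ℕ)) a with hv
  have hvW : ∀ k : Fin (2 * t), v k ∈ W := by
    intro k
    have h1 : v k = H.pow a (k.val + 1) - H.pow a k.val := by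
      rw [pow_eq_sum, pow_eq_sum, Finset.sum_range_succ, add_sub_cancel_left]
    rw [h1]
    exact sub_mem (Submodule.subset_span (pow_mem H a ha _))
      (Submodule.subset_span (pow_mem H a ha _))
  have hu_span : (∑ k ∈ Finset.range (2*t), (P ^ k) a) = allOne (4*t) := by
    rw [← pow_eq_sum, ha2t]
  have hLI : LinearIndependent (ZMod 2) v := by
    rw [Fintype.linearIndependent_iff]
    intro c hc
    by_contra hcn
    push_neg at hcn
    obtain ⟨k0, hk0⟩ := hcn
    set φ : Polynomial (ZMod 2) :=
      ∑ k : Fin (2*t), Polynomial.C (c k) * Polynomial.X ^ (k : ℕ) with hφ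
    have hφa : (Polynomial.aeval P φ) a = 0 := by
      rw [hφ, map_sum, LinearMap.sum_apply]
      rw [← hc]
      apply Finset.sum_congr rfl
      intro k _
      rw [map_mul, map_pow, Polynomial.aeval_X, Polynomial.aeval_C,
        Algebra.algebraMap_eq_smul_one, smul_mul_assoc, one_mul,
        LinearMap.smul_apply]
    have hφne : φ ≠ 0 := by
      intro h0
      have hco := congrArg (fun p => Polynomial.coeff p (k0 : ℕ)) h0
      simp only [Polynomial.coeff_zero] at hco
      rw [hφ, Polynomial.finset_sum_coeff, Finset.sum_eq_single k0] at hco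
      · rw [Polynomial.coeff_C_mul, Polynomial.coeff_X_pow, if_pos rfl, mul_one] at hco
        exact hk0 hco
      · intro k _ hk
        rw [Polynomial.coeff_C_mul, Polynomial.coeff_X_pow, if_neg, mul_zero]
        exact fun h => hk (Fin.ext h.symm)
      · intro h
        exact absurd (Finset.mem_univ k0) h
    set d := φ.rootMultiplicity 1 with hd
    set ψ := φ /ₘ (Polynomial.X - Polynomial.C 1) ^ d with hψ
    have hfac : (Polynomial.X - Polynomial.C 1) ^ d * ψ = φ :=
      Polynomial.pow_mul_divByMonic_rootMultiplicity_eq φ 1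
    have heval1 : ψ.eval 1 ≠ 0 :=
      Polynomial.eval_divByMonic_pow_rootMultiplicity_ne_zero 1 hφne
    have hdeg : φ.natDegree ≤ 2*t - 1 := by
      rw [hφ]
      apply Polynomial.natDegree_sum_le_of_forall_le
      intro k _
      refine le_trans (Polynomial.natDegree_C_mul_le _ _) ?_
      rw [Polynomial.natDegree_X_pow]
      have := k.isLt
      omega
    have hdle : d ≤ 2*t - 1 := by
      have h1 : ((Polynomial.X - Polynomial.C 1 : Polynomial (ZMod 2)) ^ d).natDegree
          ≤ φ.natDegree :=
        Polynomial.natDegree_le_of_dvd (Polynomial.pow_rootMultiplicity_dvd φ 1) hφne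
      rw [Polynomial.natDegree_pow, Polynomial.natDegree_X_sub_C, mul_one] at h1
      omega
    have hNid : ((Polynomial.X - Polynomial.C 1 : Polynomial (ZMod 2))) ^ (2*t-1)
        = ∑ k ∈ Finset.range (2*t), Polynomial.X ^ k := by
      have hpid := pol_id (s + 1)
      have h2t : 2 * t = 2 ^ (s+1) := by rw [ht, pow_succ]; ring
      rw [h2t]
      exact hpid
    have hXu : (Polynomial.aeval P ((Polynomial.X - Polynomial.C 1 : Polynomial (ZMod 2)) ^ (2*t-1))) a
        = allOne (4*t) := by
      rw [hNid, map_sum (Polynomial.aeval P) (fun k => (Polynomial.X : Polynomial (ZMod 2)) ^ k)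
        (Finset.range (2*t)), LinearMap.sum_apply, ← hu_span]
      apply Finset.sum_congr rfl
      intro k _
      rw [map_pow, Polynomial.aeval_X]
    have hkey : ψ * (Polynomial.X - Polynomial.C 1) ^ (2*t-1)
        = (Polynomial.X - Polynomial.C 1) ^ (2*t-1-d) * φ := by
      rw [← hfac, ← mul_assoc, ← pow_add,
        show 2*t-1-d + d = 2*t-1 from by omega]
      ring
    have hcontr := congrArg (fun (F : Module.End (ZMod 2) (Vec (4*t))) => F a)
      (congrArg (Polynomial.aeval P) hkey)
    simp only [map_mul, Module.End.mul_apply] at hcontr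
    rw [hXu, hφa, map_zero, aeval_PL_allOne] at hcontr
    have hone : ψ.eval 1 = 1 := by
      revert heval1
      generalize ψ.eval 1 = z
      revert z
      decide
    rw [hone, one_smul] at hcontr
    exact hu_ne hcontr
  have hlow : 2 * t ≤ Module.finrank (ZMod 2) W := by
    have h1 : Submodule.span (ZMod 2) (Set.range v) ≤ W := by
      rw [Submodule.span_le]
      rintro _ ⟨k, rfl⟩
      exact hvW k
    have h2 := finrank_span_eq_card hLI
    have h3 : Module.finrank (ZMod 2) (Submodule.span (ZMod 2) (Set.range v))
        ≤ Module.finrank (ZMod 2) W := Submodule.finrank_mono h1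
    rw [h2, Fintype.card_fin] at h3
    exact h3
  have hVr : Module.finrank (ZMod 2) (Vec (4*t)) = 4*t := by
    rw [Module.finrank_pi]
    simp
  -- split on whether t = 1 or t even
  by_cases hs0 : s = 0
  · -- t = 1 : every Hadamard code of length 4 is linear, contradiction
    exfalso
    apply hnl
    have ht1 : t = 1 := by rw [ht, hs0, pow_zero]
    -- C consists of even-weight vectors
    set f : Module.Dual (ZMod 2) (Vec (4*t)) := (dotL (n := 4*t)).flip (allOne (4*t)) with hf
    have hf_apply : ∀ x, f x = dotL x (allOne (4*t)) := fun x => rfl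
    have hCf : ∀ x ∈ H.C, f x = 0 := by
      intro x hx
      rw [hf_apply, dotL_allOne_right]
      by_cases hx0 : x = 0
      · rw [hx0, hwt0]; simp
      · by_cases hxu : x = allOne (4*t)
        · rw [hxu, wt_allOne, hcast4]
        · rw [hwt x hx hx0 hxu, hcast2]
    have hker : W ≤ LinearMap.ker f := by
      rw [hW, Submodule.span_le]
      intro x hx
      rw [SetLike.mem_coe, LinearMap.mem_ker]
      exact hCf x hx
    have hfne : f ≠ 0 := by
      intro h0
      have h1 := congrArg (fun g => g (Pi.single (⟨0, hnpos⟩ : Fin (4*t)) (1 : ZMod 2))) h0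
      simp only [LinearMap.zero_apply] at h1
      rw [hf_apply, dotL_apply] at h1
      rw [Finset.sum_eq_single (⟨0, hnpos⟩ : Fin (4*t))] at h1
      · simp [allOne] at h1
      · intro i _ hij
        rw [Pi.single_apply, if_neg hij, zero_mul]
      · intro h
        exact absurd (Finset.mem_univ _) h
    have h1one : f (Pi.single (⟨0, hnpos⟩ : Fin (4*t)) (1 : ZMod 2)) = 1 := by
      rw [hf_apply, dotL_apply]
      rw [Finset.sum_eq_single (⟨0, hnpos⟩ : Fin (4*t))]
      · simp [allOne]
      · intro i _ hij
        rw [Pi.single_apply, if_neg hij, zero_mul]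
      · intro h
        exact absurd (Finset.mem_univ _) h
    have hsurj : Function.Surjective f := by
      intro z
      rcases (show ∀ z : ZMod 2, z = 0 ∨ z = 1 by decide) z with hz | hz
      · exact ⟨0, by rw [map_zero, hz]⟩
      · exact ⟨_, by rw [h1one, hz]⟩
    have hrange : Module.finrank (ZMod 2) (LinearMap.range f) = 1 := by
      rw [LinearMap.range_eq_top.mpr hsurj, finrank_top, Module.finrank_self]
    have hkerr := LinearMap.finrank_range_add_finrank_ker f
    rw [hVr, hrange] at hkerr
    have hWle : Module.finrank (ZMod 2) W ≤ 4*t - 1 := by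
      have := Submodule.finrank_mono hker
      omega
    -- cardinality forces equality
    haveI : Fintype ↥W := Fintype.ofFinite _
    have hcardW : Fintype.card ↥W = 2 ^ Module.finrank (ZMod 2) W := by
      rw [Module.card_eq_pow_finrank (K := ZMod 2) (V := ↥W), ZMod.card]
    have hcle : Fintype.card ↥W ≤ 8 := by
      rw [hcardW]
      calc (2:ℕ) ^ Module.finrank (ZMod 2) W ≤ 2 ^ (4*t-1) :=
            Nat.pow_le_pow_right (by norm_num) hWle
        _ ≤ 8 := by rw [ht1]; norm_num
    have hncW : (W : Set (Vec (4*t))).ncard ≤ 8 := by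
      have h1 : Nat.card ↥W ≤ 8 := by
        rw [Nat.card_eq_fintype_card]
        exact hcle
      rw [← Nat.card_coe_set_eq]
      exact h1
    have hCcard : H.C.ncard = 8 := by
      rw [H.card_eq, ht1]
    have heq : H.C = (W : Set (Vec (4*t))) :=
      Set.eq_of_subset_of_ncard_le Submodule.subset_span (by omega) (Set.toFinite _)
    exact heq
  · -- t even : the code is self-orthogonal so rank ≤ 2t
    have hts : (t : ZMod 2) = 0 := by
      obtain ⟨s', rfl⟩ : ∃ s', s = s' + 1 := ⟨s - 1, by omega⟩
      rw [ht, pow_succ']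
      push_cast
      rw [show (2 : ZMod 2) = 0 from rfl]
      ring
    have horth : ∀ x ∈ H.C, ∀ y ∈ H.C, dotL x y = 0 := by
      intro x hx y hy
      by_cases hx0 : x = 0
      · rw [hx0, map_zero, LinearMap.zero_apply]
      by_cases hy0 : y = 0
      · rw [hy0, map_zero]
      by_cases hxy : y = x
      · rw [hxy, dotL_wt]
        by_cases hxu : x = allOne (4*t)
        · rw [hxu, wt_allOne, hcast4]
        · rw [hwt x hx hx0 hxu, hcast2]
      by_cases hyxu : y = x + allOne (4*t)
      · rw [hyxu]
        exact dotL_self_add_allOne x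
      by_cases hxu : x = allOne (4*t)
      · rw [dotL_comm, hxu, dotL_allOne_right]
        have hyu : y ≠ allOne (4*t) := fun h => hxy (h.trans hxu.symm)
        rw [hwt y hy hy0 hyu, hcast2]
      by_cases hyu : y = allOne (4*t)
      · rw [hyu, dotL_allOne_right, hwt x hx hx0 hxu, hcast2]
      -- generic case
      have hd := H.dist_eq x hx y hy (fun h => hxy h.symm) hyxu
      have hkc := key_count x y
      rw [hwt x hx hx0 hxu, hwt y hy hy0 hyu] at hkc
      have hint : interF x y = t := by omega
      rw [dotL_inter, hint, hts]
    have hCW : ∀ x ∈ H.C, ∀ q ∈ W, dotL x q = 0 := by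
      intro x hx q hq
      refine Submodule.span_induction (p := fun q _ => dotL x q = 0)
        (fun y hy => horth x hx y hy) ?_ ?_ ?_ hq
      · exact map_zero (dotL x)
      · intro y z _ _ h1 h2
        show dotL x (y + z) = 0
        rw [map_add, h1, h2, add_zero]
      · intro r y _ h1
        show dotL x (r • y) = 0
        rw [map_smul, h1, smul_zero]
    have horthW : ∀ p ∈ W, ∀ q ∈ W, dotL p q = 0 := by
      intro p hp
      refine Submodule.span_induction (p := fun p _ => ∀ q ∈ W, dotL p q = 0)
        (fun y hy => hCW y hy) ?_ ?_ ?_ hp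
      · intro q hq
        show dotL 0 q = 0
        rw [map_zero, LinearMap.zero_apply]
      · intro y z _ _ h1 h2 q hq
        show dotL (y + z) q = 0
        rw [map_add, LinearMap.add_apply, h1 q hq, h2 q hq, add_zero]
      · intro r y _ h1 q hq
        show dotL (r • y) q = 0
        rw [map_smul, LinearMap.smul_apply, h1 q hq, smul_zero]
    have hinj : Function.Injective (dotL (n := 4*t)) := dotL_injective
    have hrmap : Module.finrank (ZMod 2) (Submodule.map dotL W)
        = Module.finrank (ZMod 2) W :=
      ((Submodule.equivMapOfInjective dotL hinj W).finrank_eq).symm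
    have hle2 : Submodule.map dotL W ≤ W.dualAnnihilator := by
      rintro _ ⟨p, hp, rfl⟩
      rw [Submodule.mem_dualAnnihilator]
      intro w hw
      exact horthW p hp w hw
    have h5 : Module.finrank (ZMod 2) W.dualAnnihilator
        = Module.finrank (ZMod 2) (Vec (4*t) ⧸ W) :=
      ((Subspace.quotEquivAnnihilator W).finrank_eq).symm
    have h6 := Submodule.finrank_quotient_add_finrank W
    rw [hVr] at h6
    have h7 : Module.finrank (ZMod 2) W ≤ Module.finrank (ZMod 2) W.dualAnnihilator := by
      rw [← hrmap]
      exact Submodule.finrank_mono hle2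
    rw [h5] at h7
    show Module.finrank (ZMod 2) W = 2 * t
    omega
end

section
/- Let C be an HFP(4t_u,2)-code of length 4t. If the dimension of the kernel satisfies dim K(C) > 1, then the length 4t is a power of two. -/
open Finset

namespace HFPAux

/-- sign character on `ZMod 2`. -/
def sgn (x : ZMod 2) : ℤ := if x = 0 then 1 else -1

lemma sgn_add (x y : ZMod 2) : sgn (x + y) = sgn x * sgn y := by revert x y; decide

lemma sgn_sq (x : ZMod 2) : sgn x * sgn x = 1 := by revert x; decide

lemma sgn_cases (x : ZMod 2) : sgn x = 1 ∨ sgn x = -1 := by revert x; decide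

lemma sgn_zero : sgn 0 = 1 := rfl

lemma sgn_one : sgn 1 = -1 := rfl

lemma sgn_add_one (x : ZMod 2) : sgn (x + 1) = - sgn x := by revert x; decide

lemma zmod2_cases (x : ZMod 2) : x = 0 ∨ x = 1 := by revert x; decide

lemma vec_add_self {n : ℕ} (v : Vec n) : v + v = 0 := by
  funext i
  show v i + v i = 0
  rcases zmod2_cases (v i) with h | h <;> rw [h] <;> decide


lemma zmod2_add_self (x : ZMod 2) : x + x = 0 := by revert x; decide

lemma zmod2_ne_one (x y : ZMod 2) (h : ¬ x = y) : x + y = 1 := by revert x y; decide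

/-- counting ±1 valued sums and products. -/
lemma sum_prod_pm (F : ℕ → ℤ) :
    ∀ n : ℕ, (∀ i < n, F i = 1 ∨ F i = -1) →
    ∃ k : ℕ, (∑ i ∈ range n, F i) = (n : ℤ) - 2 * k ∧ (∏ i ∈ range n, F i) = (-1) ^ k := by
  intro n
  induction n with
  | zero => intro _; exact ⟨0, by simp⟩
  | succ m ih =>
    intro h
    obtain ⟨k, hs, hp⟩ := ih (fun i hi => h i (Nat.lt_succ_of_lt hi))
    rcases h m (Nat.lt_succ_self m) with h1 | h1
    · refine ⟨k, ?_, ?_⟩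
      · rw [sum_range_succ, hs, h1]; push_cast; ring
      · rw [prod_range_succ, hp, h1, mul_one]
    · refine ⟨k + 1, ?_, ?_⟩
      · rw [sum_range_succ, hs, h1]; push_cast; ring
      · rw [prod_range_succ, hp, h1, pow_succ]

lemma pm_of_sum_zero (F : ℕ → ℤ) (n : ℕ) (h : ∀ i < n, F i = 1 ∨ F i = -1)
    (hs : (∑ i ∈ range n, F i) = 0) :
    ∃ k : ℕ, n = 2 * k ∧ (∏ i ∈ range n, F i) = (-1) ^ k := by
  obtain ⟨k, h1, h2⟩ := sum_prod_pm F n h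
  rw [hs] at h1
  have : (n : ℤ) = 2 * k := by linarith
  exact ⟨k, by exact_mod_cast this, h2⟩

lemma prod_consec (X : ℕ → ℤ) (hX : ∀ i, X i * X i = 1) (n : ℕ) :
    (∏ i ∈ range n, X i * X (i + 1)) = X 0 * X n := by
  induction n with
  | zero => simp [← hX 0]
  | succ m ih =>
    rw [prod_range_succ, ih,
      show X 0 * X m * (X m * X (m + 1)) = X 0 * (X m * X m) * X (m + 1) by ring,
      hX m, mul_one]

lemma prod_consec2 (X : ℕ → ℤ) (hX : ∀ i, X i * X i = 1) (n : ℕ) :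
    (∏ i ∈ range n, X i * X (i + 2)) = X 0 * X 1 * (X n * X (n + 1)) := by
  induction n with
  | zero =>
    rw [prod_range_zero,
      show X 0 * X 1 * (X 0 * X (0 + 1)) = (X 0 * X 0) * (X 1 * X 1) by norm_num; ring,
      hX 0, hX 1, mul_one]
  | succ m ih =>
    rw [prod_range_succ, ih,
      show X 0 * X 1 * (X m * X (m + 1)) * (X m * X (m + 2))
        = X 0 * X 1 * ((X m * X m) * (X (m + 1) * X (m + 2))) by ring,
      hX m, one_mul,
      show m + 2 = m + 1 + 1 from rfl]

lemma sum_range_even_odd (F : ℕ → ℤ) (n : ℕ) :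
    ∑ i ∈ range (2 * n), F i = (∑ i ∈ range n, F (2 * i)) + ∑ i ∈ range n, F (2 * i + 1) := by
  induction n with
  | zero => simp
  | succ m ih =>
    have h2 : 2 * (m + 1) = (2 * m) + 1 + 1 := by ring
    rw [h2, sum_range_succ, sum_range_succ, ih, sum_range_succ, sum_range_succ]
    ring

/-- coset-fiber counting lemma. -/
lemma card_eq_image_mul {α β : Type*} [DecidableEq α] [DecidableEq β]
    (T W : Finset α) (mul : α → α → α) (F : α → β)
    (h1 : ∀ g ∈ T, ∀ w ∈ W, mul g w ∈ T ∧ F (mul g w) = F g)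
    (h2 : ∀ g ∈ T, ∀ h ∈ T, F g = F h → ∃ w ∈ W, mul g w = h)
    (h3 : ∀ g ∈ T, ∀ w ∈ W, ∀ w' ∈ W, mul g w = mul g w' → w = w') :
    T.card = (T.image F).card * W.card := by
  rw [Finset.card_eq_sum_card_fiberwise (fun x hx => Finset.mem_image_of_mem F hx)]
  rw [← Finset.sum_const_nat (m := W.card) ?_]
  intro b hb
  obtain ⟨g₀, hg₀, rfl⟩ := Finset.mem_image.mp hb
  symm
  apply Finset.card_bij (fun w _ => mul g₀ w)
  · intro w hw
    exact Finset.mem_filter.mpr ⟨(h1 g₀ hg₀ w hw).1, (h1 g₀ hg₀ w hw).2⟩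
  · intro w1 hw1 w2 hw2 heq
    exact h3 g₀ hg₀ w1 hw1 w2 hw2 heq
  · intro h hh
    obtain ⟨hhT, hhF⟩ := Finset.mem_filter.mp hh
    obtain ⟨w, hw, hww⟩ := h2 g₀ hg₀ h hhT hhF.symm
    exact ⟨w, hw, hww⟩

/-- half/half lemma. -/
lemma sum_sgn_eq_zero {n : ℕ} (KF : Finset (Vec n)) (f : Vec n → ZMod 2) (v₀ : Vec n)
    (hcl : ∀ v ∈ KF, v + v₀ ∈ KF) (hf : ∀ v, f (v + v₀) = f v + 1) :
    ∑ v ∈ KF, sgn (f v) = 0 := by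
  have key : ∑ v ∈ KF, sgn (f v) = ∑ v ∈ KF, sgn (f (v + v₀)) := by
    apply Finset.sum_nbij' (fun v => v + v₀) (fun v => v + v₀)
    · exact hcl
    · exact hcl
    · intro v _; rw [add_assoc, vec_add_self, add_zero]
    · intro v _; rw [add_assoc, vec_add_self, add_zero]
    · intro v _; rw [add_assoc, vec_add_self, add_zero]
  have key2 : ∑ v ∈ KF, sgn (f (v + v₀)) = ∑ v ∈ KF, - sgn (f v) :=
    Finset.sum_congr rfl (fun v _ => by rw [hf v, sgn_add_one])
  rw [Finset.sum_neg_distrib] at key2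
  linarith [key, key2]


lemma sum_range_double (G : ℕ → ℤ) (T : ℕ) (hper : ∀ i, G (i + T) = G i) :
    ∑ i ∈ range (2 * T), G i = 2 * ∑ i ∈ range T, G i := by
  rw [two_mul, Finset.sum_range_add]
  have : ∀ i, G (T + i) = G i := fun i => by rw [add_comm]; exact hper i
  rw [Finset.sum_congr rfl (fun i _ => this i)]
  ring

lemma no_negaperfect (X : ℕ → ℤ) (T : ℕ)
    (hpm : ∀ i, X i = 1 ∨ X i = -1) (hanti : ∀ i, X (i + T) = - X i)
    (hs1 : ∑ i ∈ range T, X i * X (i + 1) = 0)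
    (hs2 : ∑ i ∈ range T, X i * X (i + 2) = 0) : False := by
  have hsq : ∀ i, X i * X i = 1 := by
    intro i; rcases hpm i with h | h <;> rw [h] <;> norm_num
  have hpm1 : ∀ l i : ℕ, X i * X (i + l) = 1 ∨ X i * X (i + l) = -1 := by
    intro l i
    rcases hpm i with h | h <;> rcases hpm (i + l) with h' | h' <;> rw [h, h'] <;> norm_num
  obtain ⟨k1, hT1, hp1⟩ := pm_of_sum_zero _ T (fun i _ => hpm1 1 i) hs1
  obtain ⟨k2, hT2, hp2⟩ := pm_of_sum_zero _ T (fun i _ => hpm1 2 i) hs2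
  rw [prod_consec X hsq T] at hp1
  rw [prod_consec2 X hsq T] at hp2
  have hXT : X T = - X 0 := by have := hanti 0; rwa [zero_add] at this
  have hXT1 : X (T + 1) = - X 1 := by rw [add_comm T 1]; exact hanti 1
  rw [hXT] at hp1
  rw [hXT, hXT1] at hp2
  have h1 : (-1 : ℤ) ^ k1 = -1 := by
    rw [← hp1]; linear_combination (-1 : ℤ) * hsq 0
  have h2 : (-1 : ℤ) ^ k2 = 1 := by
    rw [← hp2]; linear_combination (X 1 * X 1) * hsq 0 + hsq 1
  have hk : k1 = k2 := by omega
  rw [hk, h2] at h1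
  norm_num at h1


lemma zmod2_natCast_add_even (i l : ℕ) : ((i + 2 * l : ℕ) : ZMod 2) = (i : ZMod 2) := by
  push_cast
  rw [show (2 : ZMod 2) = 0 by decide]
  ring

lemma zmod2_natCast_even (i : ℕ) : ((2 * i : ℕ) : ZMod 2) = 0 := by
  push_cast
  rw [show (2 : ZMod 2) = 0 by decide]
  ring

lemma zmod2_natCast_odd (i : ℕ) : ((2 * i + 1 : ℕ) : ZMod 2) = 1 := by
  push_cast
  rw [show (2 : ZMod 2) = 0 by decide]
  ring

end HFPAux
set_option maxHeartbeats 4000000 in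
open HFPAux in
/-- If an HFP(4t_u,2)-code of length `4t` has kernel of dimension `> 1`,
then `4t` is a power of two. -/
theorem length_pow_two_of_kerDim_gt_one (t : ℕ) (H : HFPCode (4 * t)) (a b : Vec (4 * t))
    (hC : HFPCode.Is4tu2 t H a b)
    (hk : 1 < kerDim H.C) :
    ∃ s : ℕ, 4 * t = 2 ^ s := by
  classical
  obtain ⟨ha, hb, hcomm, ha4t, hapos, hau, hb2, hb0, hbna, hgen⟩ := hC
  -- exclude t = 0
  rcases Nat.eq_zero_or_pos t with ht0 | ht
  · exfalso
    have hfin : H.C.Finite := Set.toFinite _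
    have hpos : 0 < H.C.ncard := (Set.ncard_pos hfin).mpr ⟨0, H.zero_mem⟩
    have hcard := H.card_eq
    omega
  -- notation
  set u : Vec (4 * t) := allOne (4 * t) with hu_def
  have hu0 : u ≠ 0 := by
    intro h
    have := congrFun h ⟨0, by omega⟩
    simp [hu_def, allOne] at this
  have hCfin : H.C.Finite := Set.toFinite _
  set S : Finset (Vec (4 * t)) := hCfin.toFinset with hS_def
  have memS : ∀ x : Vec (4 * t), x ∈ S ↔ x ∈ H.C := fun x => Set.Finite.mem_toFinset _
  have cardS : S.card = 8 * t := by
    have h1 : H.C.ncard = S.card := Set.ncard_eq_toFinset_card _ hCfin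
    have h2 := H.card_eq
    omega
  have h0S : (0 : Vec (4 * t)) ∈ S := (memS 0).mpr H.zero_mem
  have huS : u ∈ S := (memS u).mpr H.allOne_mem
  -- permAct basics
  have hpermAdd : ∀ (σ : Equiv.Perm (Fin (4 * t))) (x y : Vec (4 * t)),
      permAct σ (x + y) = permAct σ x + permAct σ y := fun _ _ _ => rfl
  have hpermZero : ∀ (σ : Equiv.Perm (Fin (4 * t))), permAct σ (0 : Vec (4 * t)) = 0 :=
    fun _ => rfl
  have hpermOne : ∀ x : Vec (4 * t), permAct 1 x = x := fun _ => rfl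
  have hpermU : ∀ (σ : Equiv.Perm (Fin (4 * t))), permAct σ u = u := fun _ => rfl
  have hpermComp : ∀ (σ τ : Equiv.Perm (Fin (4 * t))) (x : Vec (4 * t)),
      permAct (σ * τ) x = permAct σ (permAct τ x) := by
    intro σ τ x
    funext i
    show x ((σ * τ)⁻¹ i) = x (τ⁻¹ (σ⁻¹ i))
    rw [mul_inv_rev]
    rfl
  have hpermInj : ∀ (σ : Equiv.Perm (Fin (4 * t))) (x y : Vec (4 * t)),
      permAct σ x = permAct σ y → x = y := by
    intro σ x y h
    funext i
    have := congrFun h (σ i)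
    simpa [permAct] using this
  -- mul basics
  have hmul0 : ∀ x : Vec (4 * t), H.mul x 0 = x := by
    intro x; show x + permAct _ 0 = x; rw [hpermZero, add_zero]
  have h0mul : ∀ x : Vec (4 * t), H.mul 0 x = x := by
    intro x; show (0 : Vec (4 * t)) + permAct (H.π 0) x = x
    rw [H.π_zero, hpermOne, zero_add]
  have humul : ∀ g : Vec (4 * t), H.mul u g = u + g := by
    intro g; show u + permAct (H.π u) g = u + g
    rw [show H.π u = 1 from H.π_allOne, hpermOne]
  have hmulu : ∀ g : Vec (4 * t), H.mul g u = g + u := by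
    intro g; show g + permAct (H.π g) u = g + u
    rw [hpermU]
  have huu : H.mul u u = 0 := by rw [humul, vec_add_self]
  have hassoc : ∀ x ∈ H.C, ∀ y ∈ H.C, ∀ z : Vec (4 * t),
      H.mul (H.mul x y) z = H.mul x (H.mul y z) := by
    intro x hx y hy z
    show (x + permAct (H.π x) y) + permAct (H.π (x + permAct (H.π x) y)) z
      = x + permAct (H.π x) (y + permAct (H.π y) z)
    rw [H.π_mul x hx y hy, hpermComp, hpermAdd, add_assoc]
  have hmulmemS : ∀ g ∈ S, ∀ x ∈ S, H.mul g x ∈ S := by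
    intro g hg x hx
    exact (memS _).mpr (H.mul_mem g ((memS g).mp hg) x ((memS x).mp hx))
  have hLinj : ∀ g : Vec (4 * t), Function.Injective (H.mul g) := by
    intro g x y h
    exact hpermInj _ _ _ (by
      have := h
      unfold HFPCode.mul at this
      exact add_left_cancel this)
  have hLsurj : ∀ g ∈ S, ∀ y ∈ S, ∃ x ∈ S, H.mul g x = y := by
    intro g hg y hy
    have himg : S.image (H.mul g) = S := by
      apply Finset.eq_of_subset_of_card_le
      · intro z hz
        obtain ⟨x, hx, rfl⟩ := Finset.mem_image.mp hz
        exact hmulmemS g hg x hx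
      · rw [Finset.card_image_of_injective _ (hLinj g)]
    rw [← himg] at hy
    obtain ⟨x, hx, hxy⟩ := Finset.mem_image.mp hy
    exact ⟨x, hx, hxy⟩
  have hcommS : ∀ g ∈ S, ∀ h ∈ S, H.mul g h = H.mul h g := by
    intro g hg h hh
    exact hcomm g ((memS g).mp hg) h ((memS h).mp hh)
  have hinv : ∀ g ∈ S, ∃ g', g' ∈ S ∧ H.mul g g' = 0 ∧ H.mul g' g = 0 := by
    intro g hg
    obtain ⟨g', hg', hgg'⟩ := hLsurj g hg 0 h0S
    exact ⟨g', hg', hgg', by rw [hcommS g' hg' g hg]; exact hgg'⟩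
  -- pow basics
  have hpowmem : ∀ x ∈ S, ∀ i : ℕ, H.pow x i ∈ S := by
    intro x hx i
    induction i with
    | zero => exact h0S
    | succ m ih => exact hmulmemS x hx _ ih
  have hpow1 : ∀ x : Vec (4 * t), H.pow x 1 = x := by
    intro x; show H.mul x (H.pow x 0) = x; exact hmul0 x
  have hpowadd : ∀ x ∈ S, ∀ i j : ℕ, H.pow x (i + j) = H.mul (H.pow x i) (H.pow x j) := by
    intro x hx i j
    induction i with
    | zero => rw [Nat.zero_add]; exact (h0mul _).symm
    | succ m ih =>
      have h1 : m + 1 + j = (m + j) + 1 := by omega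
      rw [h1]
      show H.mul x (H.pow x (m + j)) = H.mul (H.mul x (H.pow x m)) (H.pow x j)
      rw [ih, hassoc x ((memS x).mp hx) (H.pow x m) ((memS _).mp (hpowmem x hx m))]
  -- generator membership
  have haS : a ∈ S := (memS a).mpr ha
  have hbS : b ∈ S := (memS b).mpr hb
  -- pow a reduction mod 4t
  have hpowa_cycle : ∀ q r : ℕ, H.pow a (r + 4 * t * q) = H.pow a r := by
    intro q
    induction q with
    | zero => intro r; norm_num
    | succ m ih =>
      intro r
      have h1 : r + 4 * t * (m + 1) = (r + 4 * t * m) + 4 * t := by ring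
      rw [h1, hpowadd a haS, ha4t, hmul0, ih]
  have hpowa_mod : ∀ i : ℕ, H.pow a i = H.pow a (i % (4 * t)) := by
    intro i
    conv_lhs => rw [← Nat.mod_add_div i (4 * t)]
    rw [hpowa_cycle]
  have hpowb_cycle : ∀ q r : ℕ, H.pow b (r + 2 * q) = H.pow b r := by
    intro q
    induction q with
    | zero => intro r; norm_num
    | succ m ih =>
      intro r
      have h1 : r + 2 * (m + 1) = (r + 2 * m) + 2 := by ring
      rw [h1, hpowadd b hbS, hb2, hmul0, ih]
  have hpowb_mod : ∀ j : ℕ, H.pow b j = H.pow b (j % 2) := by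
    intro j
    conv_lhs => rw [← Nat.mod_add_div j 2]
    rw [hpowb_cycle]
  have hpowa_inj : ∀ i < 4 * t, ∀ j < 4 * t, H.pow a i = H.pow a j → i = j := by
    have key : ∀ i j : ℕ, i ≤ j → j < 4 * t → H.pow a i = H.pow a j → i = j := by
      intro i j hij hj4 heq
      by_contra hne
      have hlt : 0 < j - i := by omega
      have : H.pow a j = H.mul (H.pow a i) (H.pow a (j - i)) := by
        rw [← hpowadd a haS, show i + (j - i) = j by omega]
      rw [← heq] at this
      nth_rewrite 1 [← hmul0 (H.pow a i)] at this
      have h0 : H.pow a (j - i) = 0 := (hLinj _ this).symm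
      exact hapos (j - i) hlt (by omega) h0
    intro i hi j hj heq
    rcases le_total i j with h | h
    · exact key i j h hj heq
    · exact (key j i h hi heq.symm).symm
  have hpowa_u : ∀ i : ℕ, H.pow a (i + 2 * t) = u + H.pow a i := by
    intro i
    rw [hpowadd a haS, hau, hmulu, add_comm]
  -- the parametrization  p i j = a^i * b^j
  set p : ℕ → ℕ → Vec (4 * t) := fun i j => H.mul (H.pow a i) (H.pow b j) with hp_def
  have hpS : ∀ i j : ℕ, p i j ∈ S := fun i j => hmulmemS _ (hpowmem a haS i) _ (hpowmem b hbS j)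
  have hpi0 : ∀ i : ℕ, p i 0 = H.pow a i := by
    intro i; show H.mul _ (H.pow b 0) = _; exact hmul0 _
  have hpi1 : ∀ i : ℕ, p i 1 = H.mul (H.pow a i) b := by
    intro i
    show H.mul (H.pow a i) (H.pow b 1) = _
    rw [hpow1]
  have hp_red : ∀ i j : ℕ, p i j = p (i % (4 * t)) (j % 2) := by
    intro i j
    rw [hp_def]
    simp only []
    rw [← hpowa_mod, ← hpowb_mod]
  have hpmul : ∀ i j k l : ℕ, H.mul (p i j) (p k l) = p (i + k) (j + l) := by
    intro i j k l
    have hai := hpowmem a haS i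
    have hak := hpowmem a haS k
    have hbj := hpowmem b hbS j
    have hbl := hpowmem b hbS l
    have step1 : H.mul (H.pow b j) (H.mul (H.pow a k) (H.pow b l))
        = H.mul (H.pow a k) (H.pow b (j + l)) := by
      rw [← hassoc _ ((memS _).mp hbj) _ ((memS _).mp hak),
        hcommS _ hbj _ hak,
        hassoc _ ((memS _).mp hak) _ ((memS _).mp hbj),
        ← hpowadd b hbS]
    show H.mul (H.mul (H.pow a i) (H.pow b j)) (H.mul (H.pow a k) (H.pow b l)) = _
    rw [hassoc _ ((memS _).mp hai) _ ((memS _).mp hbj), step1,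
      ← hassoc _ ((memS _).mp hai) _ ((memS _).mp hak), ← hpowadd a haS]
  have hpsurj : ∀ g ∈ S, ∃ i, i < 4 * t ∧ ∃ j, j < 2 ∧ g = p i j := by
    intro g hg
    obtain ⟨i, j, hij⟩ := hgen g ((memS g).mp hg)
    refine ⟨i % (4 * t), Nat.mod_lt _ (by omega), j % 2, Nat.mod_lt _ (by omega), ?_⟩
    rw [hij]
    exact hp_red i j
  have hpinj : ∀ i, i < 4 * t → ∀ i', i' < 4 * t → ∀ j, j < 2 → ∀ j', j' < 2 →
      p i j = p i' j' → i = i' ∧ j = j' := by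
    have keyb : ∀ i i', i' < 4 * t → H.pow a i = H.mul (H.pow a i') b → False := by
      intro i i' hi' heq
      have h1 : H.mul (H.pow a (4 * t - i')) (H.pow a i) = b := by
        rw [heq, ← hassoc _ ((memS _).mp (hpowmem a haS _)) _ ((memS _).mp (hpowmem a haS _)),
          ← hpowadd a haS, show 4 * t - i' + i' = 4 * t by omega, ha4t, h0mul]
      rw [← hpowadd a haS] at h1
      exact hbna _ h1.symm
    intro i hi i' hi' j hj j' hj' heq
    interval_cases j <;> interval_cases j'
    · refine ⟨?_, rfl⟩
      rw [hpi0, hpi0] at heq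
      exact hpowa_inj i hi i' hi' heq
    · exfalso
      rw [hpi0, hpi1] at heq
      exact keyb i i' hi' heq
    · exfalso
      rw [hpi0, hpi1] at heq
      exact keyb i' i hi heq.symm
    · refine ⟨?_, rfl⟩
      rw [hpi1, hpi1] at heq
      have h2 : H.mul b (H.pow a i) = H.mul b (H.pow a i') := by
        rw [hcommS _ hbS _ (hpowmem a haS i), hcommS _ hbS _ (hpowmem a haS i')]
        exact heq
      exact hpowa_inj i hi i' hi' (hLinj b h2)
  -- rewriting sums over S as sums over the parametrization
  have hSimage : S = ((Finset.range (4 * t)) ×ˢ (Finset.range 2)).image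
      (fun ij : ℕ × ℕ => p ij.1 ij.2) := by
    apply Finset.Subset.antisymm
    · intro g hg
      obtain ⟨i, hi, j, hj, rfl⟩ := hpsurj g hg
      exact Finset.mem_image.mpr ⟨(i, j), Finset.mem_product.mpr
        ⟨Finset.mem_range.mpr hi, Finset.mem_range.mpr hj⟩, rfl⟩
    · intro g hg
      obtain ⟨ij, _, rfl⟩ := Finset.mem_image.mp hg
      exact hpS _ _
  have hsumS : ∀ F : Vec (4 * t) → ℤ,
      ∑ g ∈ S, F g = ∑ i ∈ Finset.range (4 * t), (F (p i 0) + F (p i 1)) := by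
    intro F
    rw [hSimage, Finset.sum_image ?_, Finset.sum_product]
    · apply Finset.sum_congr rfl
      intro i _
      rw [show (2 : ℕ) = 1 + 1 from rfl, Finset.sum_range_succ, Finset.sum_range_one]
    · intro x hx y hy hxy
      obtain ⟨hx1, hx2⟩ := Finset.mem_product.mp hx
      obtain ⟨hy1, hy2⟩ := Finset.mem_product.mp hy
      obtain ⟨e1, e2⟩ := hpinj x.1 (Finset.mem_range.mp hx1) y.1 (Finset.mem_range.mp hy1)
        x.2 (Finset.mem_range.mp hx2) y.2 (Finset.mem_range.mp hy2) hxy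
      exact Prod.ext e1 e2
  -- the distinguished coordinate and the 2:1 map φ
  have hi0 : (0 : ℕ) < 4 * t := by omega
  set i0 : Fin (4 * t) := ⟨0, hi0⟩ with hi0_def
  set φ : Vec (4 * t) → Fin (4 * t) := fun g => (H.π g)⁻¹ i0 with hφ_def
  have hπmulS : ∀ g ∈ S, ∀ h ∈ S, H.π (H.mul g h) = H.π g * H.π h := by
    intro g hg h hh; exact H.π_mul g ((memS g).mp hg) h ((memS h).mp hh)
  have hπadd_u : ∀ g ∈ S, H.π (u + g) = H.π g := by
    intro g hg
    rw [← humul g, hπmulS u huS g hg, H.π_allOne, one_mul]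
  have hff : ∀ d ∈ S, (∃ i : Fin (4 * t), H.π d i = i) → d = 0 ∨ d = u := by
    intro d hd ⟨i, hi⟩
    by_contra hcon
    push_neg at hcon
    exact H.π_fixedfree d ((memS d).mp hd) hcon.1 hcon.2 i hi
  have hφfib : ∀ g ∈ S, ∀ h ∈ S, φ g = φ h → (h = g ∨ h = u + g) := by
    intro g hg h hh heq
    obtain ⟨g', hg'S, hgg', hg'g⟩ := hinv g hg
    have hπg' : H.π g' = (H.π g)⁻¹ := by
      have h1 : H.π g * H.π g' = 1 := by
        rw [← hπmulS g hg g' hg'S, hgg', H.π_zero]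
      exact ((inv_eq_of_mul_eq_one_right h1).symm)
    set d := H.mul g' h with hd_def
    have hdS : d ∈ S := hmulmemS g' hg'S h hh
    have hπd : H.π d = H.π g' * H.π h := hπmulS g' hg'S h hh
    have hfix : H.π d ((H.π h)⁻¹ i0) = (H.π h)⁻¹ i0 := by
      rw [hπd, Equiv.Perm.mul_apply, ← Equiv.Perm.mul_apply (H.π h), mul_inv_cancel, Equiv.Perm.one_apply, hπg']
      exact heq
    have hd0u := hff d hdS ⟨_, hfix⟩
    have hgd : H.mul g d = h := by
      rw [hd_def, ← hassoc g ((memS g).mp hg) g' ((memS g').mp hg'S) h, hgg', h0mul]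
    rcases hd0u with h0 | hu1
    · left; rw [← hgd, h0, hmul0]
    · right; rw [← hgd, hu1, hmulu, add_comm]
  have hWuf : ({0, u} : Finset (Vec (4 * t))).card = 2 := by
    rw [Finset.card_insert_of_notMem (by simp [Ne.symm hu0]), Finset.card_singleton]
  have hgu_ne : ∀ g : Vec (4 * t), u + g ≠ g := by
    intro g hcon
    apply hu0
    have h2 : u + g = 0 + g := by rw [hcon, zero_add]
    exact add_right_cancel h2
  have hcard_fiber : S.card = (S.image φ).card * 2 := by
    rw [← hWuf]
    apply card_eq_image_mul S _ H.mul φ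
    · intro g hg w hw
      rcases Finset.mem_insert.mp hw with rfl | hw
      · rw [hmul0]; exact ⟨hg, rfl⟩
      · rw [Finset.mem_singleton.mp hw, hmulu]
        constructor
        · exact (memS _).mpr (H.add_allOne_mem g ((memS g).mp hg))
        · show φ (g + u) = φ g
          rw [hφ_def]
          simp only []
          rw [add_comm g u, hπadd_u g hg]
    · intro g hg h hh heq
      rcases hφfib g hg h hh heq with hcase | hcase
      · exact ⟨0, Finset.mem_insert_self _ _, by rw [hmul0]; exact hcase.symm⟩
      · exact ⟨u, Finset.mem_insert.mpr (Or.inr (Finset.mem_singleton_self u)),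
          by rw [hmulu, add_comm]; exact hcase.symm⟩
    · intro g _ w hw w' hw' heq
      exact hLinj g heq
  have himgφ : S.image φ = Finset.univ := by
    apply Finset.eq_univ_of_card
    have : Fintype.card (Fin (4 * t)) = 4 * t := Fintype.card_fin _
    omega
  have hφsurj : ∀ i : Fin (4 * t), ∃ g ∈ S, φ g = i := by
    intro i
    have : i ∈ S.image φ := by rw [himgφ]; exact Finset.mem_univ i
    exact Finset.mem_image.mp this
  have hfib2 : ∀ i : Fin (4 * t), (S.filter (fun g => φ g = i)).card = 2 := by
    intro i
    obtain ⟨g₀, hg₀, rfl⟩ := hφsurj i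
    have hset : S.filter (fun g => φ g = φ g₀) = {g₀, u + g₀} := by
      apply Finset.Subset.antisymm
      · intro g hg
        obtain ⟨hgS, hgφ⟩ := Finset.mem_filter.mp hg
        rcases hφfib g₀ hg₀ g hgS hgφ.symm with rfl | rfl
        · exact Finset.mem_insert_self _ _
        · exact Finset.mem_insert.mpr (Or.inr (Finset.mem_singleton_self _))
      · intro g hg
        rcases Finset.mem_insert.mp hg with rfl | hg
        · exact Finset.mem_filter.mpr ⟨hg₀, rfl⟩
        · rw [Finset.mem_singleton.mp hg]
          refine Finset.mem_filter.mpr ⟨?_, ?_⟩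
          · rw [add_comm]
            exact (memS _).mpr (H.add_allOne_mem g₀ ((memS g₀).mp hg₀))
          · show φ (u + g₀) = φ g₀
            rw [hφ_def]; simp only []; rw [hπadd_u g₀ hg₀]
    rw [hset, Finset.card_insert_of_notMem
      (Finset.notMem_singleton.mpr (Ne.symm (hgu_ne g₀))), Finset.card_singleton]
  have hsumφ : ∀ F : Fin (4 * t) → ℤ, ∑ g ∈ S, F (φ g) = 2 * ∑ i : Fin (4 * t), F i := by
    intro F
    rw [Finset.sum_comp F φ, himgφ]
    rw [Finset.mul_sum]
    apply Finset.sum_congr rfl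
    intro i _
    rw [hfib2 i]
    push_cast
    ring
  -- the sign function ψ
  set ψ : Vec (4 * t) → ℤ := fun g => sgn (g i0) with hψ_def
  have hψpm : ∀ g : Vec (4 * t), ψ g = 1 ∨ ψ g = -1 := fun g => sgn_cases _
  have hψsq : ∀ g : Vec (4 * t), ψ g * ψ g = 1 := fun g => sgn_sq _
  have hcorr_pt : ∀ g w : Vec (4 * t), ψ g * ψ (H.mul g w) = sgn (w (φ g)) := by
    intro g w
    have h1 : H.mul g w i0 = g i0 + w (φ g) := rfl
    rw [hψ_def]
    simp only []
    rw [h1, sgn_add, ← mul_assoc, sgn_sq, one_mul]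
  have hψu : ∀ g : Vec (4 * t), ψ (u + g) = - ψ g := by
    intro g
    rw [hψ_def]
    simp only []
    show sgn ((u + g) i0) = - sgn (g i0)
    have : (u + g) i0 = g i0 + 1 := by
      show u i0 + g i0 = g i0 + 1
      rw [add_comm]; rfl
    rw [this, sgn_add_one]
  -- balancedness of nonzero non-u codewords
  have hwt0 : ∀ w ∈ S, w ≠ 0 → w ≠ u → ∑ i : Fin (4 * t), sgn (w i) = 0 := by
    intro w hw hw0 hwu
    have hd := H.dist_eq 0 H.zero_mem w ((memS w).mp hw) (Ne.symm hw0)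
      (by rw [zero_add]; exact hwu)
    have hdval : hammingDist (0 : Vec (4 * t)) w
        = (Finset.univ.filter (fun i => ¬ (w i = 0))).card := by
      show (Finset.univ.filter (fun i => (0 : Vec (4 * t)) i ≠ w i)).card = _
      congr 1
      apply Finset.filter_congr
      intro i _
      show (0 : ZMod 2) ≠ w i ↔ ¬ (w i = 0)
      exact ne_comm
    have hsplit := Finset.sum_filter_add_sum_filter_not Finset.univ
      (fun i => w i = 0) (fun i => sgn (w i))
    have h1 : ∑ i ∈ Finset.univ.filter (fun i => w i = 0), sgn (w i)
        = (Finset.univ.filter (fun i => w i = 0)).card := by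
      rw [Finset.sum_congr rfl (fun i hi => by
        rw [(Finset.mem_filter.mp hi).2, sgn_zero])]
      simp
    have h2 : ∑ i ∈ Finset.univ.filter (fun i => ¬ (w i = 0)), sgn (w i)
        = - (Finset.univ.filter (fun i => ¬ (w i = 0))).card := by
      rw [Finset.sum_congr rfl (fun i hi => by
        have := (Finset.mem_filter.mp hi).2
        rcases zmod2_cases (w i) with h | h
        · exact absurd h this
        · rw [h, sgn_one])]
      simp
    have hcards := Finset.card_filter_add_card_filter_not
      (s := (Finset.univ : Finset (Fin (4 * t)))) (fun i => w i = 0)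
    rw [Finset.card_univ, Fintype.card_fin] at hcards
    rw [hdval] at hd
    rw [← hsplit, h1, h2]
    have hc2 : ((Finset.univ.filter (fun i => ¬ (w i = 0))).card : ℤ) = 2 * t := by
      have : 2 * (Finset.univ.filter (fun i => ¬ (w i = 0))).card = 4 * t := hd
      push_cast
      omega
    rw [hc2]
    have hc1 : ((Finset.univ.filter (fun i => w i = 0)).card : ℤ) = 2 * t := by
      have h4 : 2 * (Finset.univ.filter (fun i => ¬ (w i = 0))).card = 4 * t := hd
      push_cast
      omega
    rw [hc1]
    ring
  -- the correlation identity
  have hcorr : ∀ w ∈ S, w ≠ 0 → w ≠ u → ∑ g ∈ S, ψ g * ψ (H.mul g w) = 0 := by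
    intro w hw hw0 hwu
    have h1 : ∑ g ∈ S, ψ g * ψ (H.mul g w) = ∑ g ∈ S, sgn (w (φ g)) :=
      Finset.sum_congr rfl (fun g _ => hcorr_pt g w)
    rw [h1, hsumφ (fun i => sgn (w i)), hwt0 w hw hw0 hwu, mul_zero]
  -- kernel basics
  have hker_add_mem : ∀ z ∈ kerSet H.C, ∀ x ∈ H.C, z + x ∈ H.C := by
    intro z hz x hx
    have hz' : (fun x => z + x) '' H.C = H.C := hz
    rw [← hz']
    exact ⟨x, hx, rfl⟩
  have hker_sub : ∀ z : Vec (4 * t), (∀ x ∈ H.C, z + x ∈ H.C) → z ∈ kerSet H.C := by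
    intro z hcl
    show (fun x => z + x) '' H.C = H.C
    apply Set.eq_of_subset_of_ncard_le ?_ ?_ hCfin
    · rintro y ⟨x, hx, rfl⟩; exact hcl x hx
    · rw [Set.ncard_image_of_injective _ (add_right_injective z)]
  have hker0 : (0 : Vec (4 * t)) ∈ kerSet H.C :=
    hker_sub 0 (by intro x hx; rw [zero_add]; exact hx)
  have hkeru : u ∈ kerSet H.C :=
    hker_sub u (by intro x hx; rw [add_comm]; exact H.add_allOne_mem x hx)
  have hkerC : ∀ z ∈ kerSet H.C, z ∈ H.C := by
    intro z hz
    have := hker_add_mem z hz 0 H.zero_mem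
    rwa [add_zero] at this
  have hker_addcl : ∀ z ∈ kerSet H.C, ∀ z' ∈ kerSet H.C, z + z' ∈ kerSet H.C := by
    intro z hz z' hz'
    apply hker_sub
    intro x hx
    rw [add_assoc]
    exact hker_add_mem z hz _ (hker_add_mem z' hz' x hx)
  have hker_pi : ∀ g ∈ S, ∀ z ∈ kerSet H.C, permAct (H.π g) z ∈ kerSet H.C := by
    intro g hg z hz
    apply hker_sub
    intro x hx
    obtain ⟨y, hy, hxy⟩ := hLsurj g hg x ((memS x).mpr hx)
    have hzy : z + y ∈ H.C := hker_add_mem z hz y ((memS y).mp hy)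
    have hkey : H.mul g (z + y) = permAct (H.π g) z + x := by
      rw [← hxy]
      show g + permAct (H.π g) (z + y) = permAct (H.π g) z + (g + permAct (H.π g) y)
      rw [hpermAdd]
      abel
    rw [← hkey]
    exact H.mul_mem g ((memS g).mp hg) (z + y) hzy
  -- the kernel as a submodule
  set KSub : Submodule (ZMod 2) (Vec (4 * t)) :=
    { carrier := kerSet H.C
      add_mem' := fun hz hz' => hker_addcl _ hz _ hz'
      zero_mem' := hker0
      smul_mem' := by
        intro c z hz
        rcases zmod2_cases c with rfl | rfl
        · rw [zero_smul]; exact hker0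
        · rw [one_smul]; exact hz } with hKSub_def
  have hspan : Submodule.span (ZMod 2) (kerSet H.C) = KSub := Submodule.span_eq KSub
  have hD : kerDim H.C = Module.finrank (ZMod 2) KSub := by
    rw [kerDim, hspan]
  set D : ℕ := Module.finrank (ZMod 2) KSub with hD_def
  have hkD : 1 < D := by rw [← hD]; exact hk
  -- the kernel as a Finset
  set KF : Finset (Vec (4 * t)) := S.filter (fun v => v ∈ kerSet H.C) with hKF_def
  have memKF : ∀ v : Vec (4 * t), v ∈ KF ↔ v ∈ kerSet H.C := by
    intro v
    constructor
    · exact fun h => (Finset.mem_filter.mp h).2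
    · intro h; exact Finset.mem_filter.mpr ⟨(memS v).mpr (hkerC v h), h⟩
  have h0KF : (0 : Vec (4 * t)) ∈ KF := (memKF 0).mpr hker0
  have huKF : u ∈ KF := (memKF u).mpr hkeru
  have hKFcard : KF.card = 2 ^ D := by
    have hfin : Fintype ↥KSub := Fintype.ofFinite _
    have h1 : Fintype.card ↥KSub = 2 ^ D := by
      have hbasis := Module.finBasis (ZMod 2) ↥KSub
      rw [Module.card_fintype hbasis, ZMod.card 2, Fintype.card_fin]
    have h2 : Nat.card ↥KSub = 2 ^ D := by rw [Nat.card_eq_fintype_card, h1]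
    have h3 : (kerSet H.C) = (↑KF : Set (Vec (4 * t))) := by
      ext v
      rw [Finset.mem_coe, memKF]
    have h4 : Nat.card ↥KSub = (kerSet H.C).ncard := Nat.card_coe_set_eq _
    rw [h3, Set.ncard_coe_finset] at h4
    omega
  have hKF_addcl : ∀ v ∈ KF, ∀ w ∈ KF, v + w ∈ KF := by
    intro v hv w hw
    exact (memKF _).mpr (hker_addcl v ((memKF v).mp hv) w ((memKF w).mp hw))
  have hKF_pi : ∀ g ∈ S, ∀ v ∈ KF, permAct (H.π g) v ∈ KF := by
    intro g hg v hv
    exact (memKF _).mpr (hker_pi g hg v ((memKF v).mp hv))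
  -- counting: |KF| * |cls| = 8t
  set cls : Finset (Fin (4 * t)) := Finset.univ.filter (fun i => ∀ v ∈ KF, v i = v i0)
    with hcls_def
  have hcount : KF.card * cls.card = 8 * t := by
    have hway1 : ∑ v ∈ KF, (∑ i : Fin (4 * t), sgn (v i + v i0)) = 8 * t := by
      have hpt : ∀ v ∈ KF, (∑ i : Fin (4 * t), sgn (v i + v i0))
          = (if v = 0 then (4 * t : ℤ) else 0) + (if v = u then (4 * t : ℤ) else 0) := by
        intro v hv
        have hinner : (∑ i : Fin (4 * t), sgn (v i + v i0))
            = sgn (v i0) * ∑ i : Fin (4 * t), sgn (v i) := by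
          rw [Finset.mul_sum]
          apply Finset.sum_congr rfl
          intro i _
          rw [sgn_add, mul_comm]
        by_cases hv0 : v = 0
        · rw [hinner, hv0, if_pos rfl, if_neg (by rw [← hv0]; exact fun hc => hu0 (hc ▸ hv0))]
          have h1 : ∀ i : Fin (4 * t), sgn ((0 : Vec (4 * t)) i) = 1 := fun i => sgn_zero
          rw [Finset.sum_congr rfl (fun i _ => h1 i),
            show sgn ((0 : Vec (4 * t)) i0) = 1 from sgn_zero,
            Finset.sum_const, Finset.card_univ, Fintype.card_fin]
          push_cast
          ring
        by_cases hvu : v = u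
        · rw [hinner, hvu, if_neg hu0, if_pos rfl]
          have h1 : ∀ i : Fin (4 * t), sgn (u i) = -1 := fun i => sgn_one
          rw [Finset.sum_congr rfl (fun i _ => h1 i),
            show sgn (u i0) = -1 from sgn_one,
            Finset.sum_const, Finset.card_univ, Fintype.card_fin]
          push_cast
          ring
        · rw [hinner, hwt0 v ((Finset.mem_filter.mp hv).1) hv0 hvu, mul_zero,
            if_neg hv0, if_neg hvu, add_zero]
      rw [Finset.sum_congr rfl hpt, Finset.sum_add_distrib,
        Finset.sum_ite_eq' KF (0 : Vec (4 * t)) (fun _ => (4 * t : ℤ)),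
        Finset.sum_ite_eq' KF u (fun _ => (4 * t : ℤ)),
        if_pos h0KF, if_pos huKF]
      ring
    have hway2 : ∑ v ∈ KF, (∑ i : Fin (4 * t), sgn (v i + v i0))
        = (cls.card : ℤ) * KF.card := by
      rw [Finset.sum_comm]
      have hpt : ∀ i : Fin (4 * t), (∑ v ∈ KF, sgn (v i + v i0))
          = if i ∈ cls then (KF.card : ℤ) else 0 := by
        intro i
        by_cases hic : i ∈ cls
        · rw [if_pos hic]
          have hone : ∀ v ∈ KF, sgn (v i + v i0) = 1 := by
            intro v hv
            have hvi := (Finset.mem_filter.mp hic).2 v hv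
            rw [hvi, zmod2_add_self, sgn_zero]
          rw [Finset.sum_congr rfl hone]
          simp
        · rw [if_neg hic]
          rw [hcls_def] at hic
          simp only [Finset.mem_filter, Finset.mem_univ, true_and] at hic
          push_neg at hic
          obtain ⟨v₀, hv₀KF, hv₀ne⟩ := hic
          apply sum_sgn_eq_zero KF (fun v => v i + v i0) v₀
          · intro v hv; exact hKF_addcl v hv v₀ hv₀KF
          · intro v
            show (v + v₀) i + (v + v₀) i0 = (v i + v i0) + 1
            rw [← zmod2_ne_one _ _ hv₀ne]
            show v i + v₀ i + (v i0 + v₀ i0) = _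
            ring
      rw [Finset.sum_congr rfl (fun i _ => hpt i)]
      rw [Finset.sum_ite_mem, Finset.univ_inter, Finset.sum_const]
      push_cast
      ring
    have hZ : (cls.card : ℤ) * (KF.card : ℤ) = 8 * (t : ℤ) := hway2.symm.trans hway1
    have hgoal : cls.card * KF.card = 8 * t := by exact_mod_cast hZ
    rw [mul_comm]
    exact hgoal
  -- commuting permutations
  have hπcommS : ∀ g ∈ S, ∀ h ∈ S, H.π g * H.π h = H.π h * H.π g := by
    intro g hg h hh
    rw [← hπmulS g hg h hh, ← hπmulS h hh g hg, hcommS g hg h hh]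
  have hinv_pt : ∀ g ∈ S, ∀ h ∈ S, ∀ j : Fin (4 * t),
      (H.π g)⁻¹ ((H.π h)⁻¹ j) = (H.π h)⁻¹ ((H.π g)⁻¹ j) := by
    intro g hg h hh j
    have h1 : (H.π h * H.π g)⁻¹ = (H.π g * H.π h)⁻¹ := by rw [hπcommS g hg h hh]
    calc (H.π g)⁻¹ ((H.π h)⁻¹ j) = ((H.π h) * (H.π g))⁻¹ j := by rw [mul_inv_rev]; rfl
      _ = ((H.π g) * (H.π h))⁻¹ j := by rw [h1]
      _ = (H.π h)⁻¹ ((H.π g)⁻¹ j) := by rw [mul_inv_rev]; rfl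
  have hW0_iff : ∀ g ∈ S, ((∀ v ∈ KF, permAct (H.π g) v = v) ↔ φ g ∈ cls) := by
    intro g hg
    constructor
    · intro hfix
      rw [hcls_def]
      refine Finset.mem_filter.mpr ⟨Finset.mem_univ _, ?_⟩
      intro v hv
      exact congrFun (hfix v hv) i0
    · intro hclsg v hv
      funext i
      obtain ⟨h, hh, hφh⟩ := hφsurj i
      show v ((H.π g)⁻¹ i) = v i
      have hw : permAct (H.π h) v ∈ KF := hKF_pi h hh v hv
      have h1 := (Finset.mem_filter.mp hclsg).2 (permAct (H.π h) v) hw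
      have h2 : v ((H.π h)⁻¹ ((H.π g)⁻¹ i0)) = v ((H.π h)⁻¹ i0) := h1
      rw [← hφh]
      show v ((H.π g)⁻¹ ((H.π h)⁻¹ i0)) = v ((H.π h)⁻¹ i0)
      rw [hinv_pt g hg h hh i0]
      exact h2
  set W0 : Finset (Vec (4 * t)) := S.filter (fun g => ∀ v ∈ KF, permAct (H.π g) v = v)
    with hW0_def
  have hW0card : W0.card = 2 * cls.card := by
    have hWeq : W0 = S.filter (fun g => φ g ∈ cls) :=
      Finset.filter_congr (fun g hg => by rw [hW0_iff g hg])
    rw [hWeq]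
    rw [Finset.card_eq_sum_card_fiberwise
      (s := S.filter (fun g => φ g ∈ cls)) (f := φ) (t := cls) (fun g hgm => (Finset.mem_filter.mp hgm).2)]
    rw [Finset.sum_congr rfl (g := fun _ => 2) ?_, Finset.sum_const, smul_eq_mul, mul_comm]
    intro i hi
    have heqf : (S.filter (fun g => φ g ∈ cls)).filter (fun g => φ g = i)
        = S.filter (fun g => φ g = i) := by
      ext g
      simp only [Finset.mem_filter, and_assoc]
      constructor
      · rintro ⟨h1, h2, h3⟩; exact ⟨h1, h3⟩
      · rintro ⟨h1, h3⟩; exact ⟨h1, h3 ▸ hi, h3⟩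
    rw [heqf, hfib2 i]
  have h0W0 : (0 : Vec (4 * t)) ∈ W0 := by
    rw [hW0_def]
    refine Finset.mem_filter.mpr ⟨h0S, ?_⟩
    intro v _
    rw [H.π_zero, hpermOne]
  have hW0pos : 0 < W0.card := Finset.card_pos.mpr ⟨0, h0W0⟩
  have hnum : 8 * t = 2 ^ (D - 1) * W0.card := by
    have h1 : KF.card * cls.card = 8 * t := hcount
    rw [hKFcard] at h1
    rw [hW0card]
    calc 8 * t = 2 ^ D * cls.card := h1.symm
      _ = (2 ^ (D - 1) * 2) * cls.card := by
          congr 1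
          rw [← pow_succ]
          congr 1
          omega
      _ = 2 ^ (D - 1) * (2 * cls.card) := by ring
  -- existence of an eigenvector in the kernel
  have haddu_cancel : ∀ x : Vec (4 * t), x + u + u = x := by
    intro x; rw [add_assoc, vec_add_self, add_zero]
  have heig' : ∃ z ∈ KF, z ≠ 0 ∧ z ≠ u ∧
      (∀ g ∈ S, permAct (H.π g) z = z ∨ permAct (H.π g) z = z + u) := by
    by_contra hno
    push_neg at hno
    set P : Finset (Vec (4 * t)) := KF.filter (fun v => v ≠ 0 ∧ v ≠ u) with hP_def
    have hmemP : ∀ v : Vec (4 * t), v ∈ P ↔ (v ∈ KF ∧ v ≠ 0 ∧ v ≠ u) := by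
      intro v; rw [hP_def, Finset.mem_filter]
    set Bf : Vec (4 * t) → Finset (Vec (4 * t)) :=
      fun v => S.image (fun g => permAct (H.π g) v) with hBf_def
    set Af : Vec (4 * t) → Finset (Vec (4 * t)) :=
      fun v => Bf v ∪ (Bf v).image (fun x => x + u) with hAf_def
    have hBmem : ∀ v x : Vec (4 * t), x ∈ Bf v ↔ ∃ g ∈ S, permAct (H.π g) v = x := by
      intro v x; rw [hBf_def]; simp [Finset.mem_image]
    have hvBv : ∀ v : Vec (4 * t), v ∈ Bf v := by
      intro v
      exact (hBmem v v).mpr ⟨0, h0S, by rw [H.π_zero, hpermOne]⟩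
    have hP_pi : ∀ v ∈ P, ∀ g ∈ S, permAct (H.π g) v ∈ P := by
      intro v hv g hg
      obtain ⟨hvKF, hv0, hvu⟩ := (hmemP v).mp hv
      refine (hmemP _).mpr ⟨hKF_pi g hg v hvKF, ?_, ?_⟩
      · intro hc
        exact hv0 (hpermInj (H.π g) v 0 (by rw [hc, hpermZero]))
      · intro hc
        exact hvu (hpermInj (H.π g) v u (by rw [hc, hpermU]))
    have hP_addu : ∀ v ∈ P, v + u ∈ P := by
      intro v hv
      obtain ⟨hvKF, hv0, hvu⟩ := (hmemP v).mp hv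
      refine (hmemP _).mpr ⟨hKF_addcl v hvKF u huKF, ?_, ?_⟩
      · intro hc
        apply hvu
        have := congrArg (fun x => x + u) hc
        simpa [haddu_cancel, zero_add] using this
      · intro hc
        apply hv0
        have := congrArg (fun x => x + u) hc
        simpa [haddu_cancel, vec_add_self] using this
    -- the stabilizer subgroup facts
    set St0 : Vec (4 * t) → Finset (Vec (4 * t)) :=
      fun v => S.filter (fun g => permAct (H.π g) v = v) with hSt0_def
    have hstabB : ∀ v : Vec (4 * t), 8 * t = (Bf v).card * (St0 v).card := by
      intro v
      rw [← cardS, hBf_def]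
      apply card_eq_image_mul S (St0 v) H.mul (fun g => permAct (H.π g) v)
      · intro g hg w hw
        obtain ⟨hwS, hwfix⟩ := Finset.mem_filter.mp hw
        refine ⟨hmulmemS g hg w hwS, ?_⟩
        rw [hπmulS g hg w hwS, hpermComp, hwfix]
      · intro g hg h hh heq
        obtain ⟨g', hg'S, hgg', hg'g⟩ := hinv g hg
        refine ⟨H.mul g' h, ?_, ?_⟩
        · refine Finset.mem_filter.mpr ⟨hmulmemS g' hg'S h hh, ?_⟩
          rw [hπmulS g' hg'S h hh, hpermComp, ← heq, ← hpermComp, ← hπmulS g' hg'S g hg,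
            hg'g, H.π_zero, hpermOne]
        · rw [← hassoc g ((memS g).mp hg) g' ((memS g').mp hg'S) h, hgg', h0mul]
      · intro g _ w _ w' _ heq
        exact hLinj g heq
    have hstabW : ∀ v ∈ KF, W0.card ∣ (St0 v).card := by
      intro v hvKF
      have hres := card_eq_image_mul (St0 v) W0 H.mul
        (fun g => (fun x : Vec (4 * t) => if x ∈ KF then permAct (H.π g) x else 0))
        (by
          intro g hg w hw
          obtain ⟨hgS, hgfix⟩ := Finset.mem_filter.mp hg
          have hw' := hw
          rw [hW0_def] at hw'
          obtain ⟨hwS, hwfix⟩ := Finset.mem_filter.mp hw'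
          constructor
          · refine Finset.mem_filter.mpr ⟨hmulmemS g hgS w hwS, ?_⟩
            rw [hπmulS g hgS w hwS, hpermComp, hwfix v hvKF, hgfix]
          · funext x
            show (if x ∈ KF then permAct (H.π (H.mul g w)) x else 0)
              = (if x ∈ KF then permAct (H.π g) x else 0)
            by_cases hx : x ∈ KF
            · rw [if_pos hx, if_pos hx, hπmulS g hgS w hwS, hpermComp, hwfix x hx]
            · rw [if_neg hx, if_neg hx])
        (by
          intro g hg h hh heq
          obtain ⟨hgS, hgfix⟩ := Finset.mem_filter.mp hg
          obtain ⟨hhS, hhfix⟩ := Finset.mem_filter.mp hh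
          obtain ⟨g', hg'S, hgg', hg'g⟩ := hinv g hgS
          refine ⟨H.mul g' h, ?_, ?_⟩
          · rw [hW0_def]
            refine Finset.mem_filter.mpr ⟨hmulmemS g' hg'S h hhS, ?_⟩
            intro x hx
            have hpt : (if x ∈ KF then permAct (H.π g) x else 0)
                = (if x ∈ KF then permAct (H.π h) x else 0) := congrFun heq x
            rw [if_pos hx, if_pos hx] at hpt
            rw [hπmulS g' hg'S h hhS, hpermComp, ← hpt,
              ← hpermComp (H.π g') (H.π g) x,
              ← hπmulS g' hg'S g hgS, hg'g, H.π_zero, hpermOne]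
          · rw [← hassoc g ((memS g).mp hgS) g' ((memS g').mp hg'S) h, hgg', h0mul])
        (by
          intro g _ w _ w' _ heq
          exact hLinj g heq)
      exact ⟨((St0 v).image _).card, by rw [hres, mul_comm]⟩
    have hBdvd : ∀ v ∈ KF, (Bf v).card ∣ 2 ^ (D - 1) := by
      intro v hvKF
      obtain ⟨m, hm⟩ := hstabW v hvKF
      refine ⟨m, ?_⟩
      have h1 : 8 * t = (Bf v).card * (W0.card * m) := by rw [← hm]; exact hstabB v
      have h2 : 2 ^ (D - 1) * W0.card = (Bf v).card * m * W0.card := by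
        rw [← hnum, h1]; ring
      exact Nat.eq_of_mul_eq_mul_right hW0pos h2
    -- class stability
    have hBshift : ∀ (v : Vec (4 * t)), ∀ g ∈ S, Bf (permAct (H.π g) v) = Bf v := by
      intro v g hg
      apply Finset.Subset.antisymm
      · intro x hx
        obtain ⟨h, hh, rfl⟩ := (hBmem _ x).mp hx
        refine (hBmem v _).mpr ⟨H.mul h g, hmulmemS h hh g hg, ?_⟩
        rw [hπmulS h hh g hg, hpermComp]
      · intro x hx
        obtain ⟨h, hh, rfl⟩ := (hBmem v x).mp hx
        obtain ⟨g', hg'S, hgg', hg'g⟩ := hinv g hg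
        refine (hBmem _ _).mpr ⟨H.mul h g', hmulmemS h hh g' hg'S, ?_⟩
        rw [hπmulS h hh g' hg'S, hpermComp, ← hpermComp (H.π g') (H.π g) v,
          ← hπmulS g' hg'S g hg, hg'g, H.π_zero, hpermOne]
    have hBshift_u : ∀ v : Vec (4 * t), Bf (v + u) = (Bf v).image (fun x => x + u) := by
      intro v
      rw [hBf_def]
      rw [Finset.image_image]
      apply Finset.image_congr
      intro g _
      show permAct (H.π g) (v + u) = permAct (H.π g) v + u
      rw [hpermAdd, hpermU]
    have himgu_invol : ∀ B : Finset (Vec (4 * t)),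
        (B.image (fun x => x + u)).image (fun x => x + u) = B := by
      intro B
      rw [Finset.image_image]
      have : ((fun x : Vec (4 * t) => x + u) ∘ (fun x => x + u)) = id := by
        funext x; exact haddu_cancel x
      rw [this, Finset.image_id]
    have hAstab : ∀ v ∈ P, ∀ x ∈ Af v, Af x = Af v ∧ x ∈ P := by
      intro v hv x hx
      rw [hAf_def] at hx
      rcases Finset.mem_union.mp hx with hxB | hxB
      · obtain ⟨g, hg, rfl⟩ := (hBmem v x).mp hxB
        constructor
        · rw [hAf_def]
          simp only []
          rw [hBshift v g hg]
        · exact hP_pi v hv g hg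
      · obtain ⟨y, hyB, rfl⟩ := Finset.mem_image.mp hxB
        obtain ⟨g, hg, rfl⟩ := (hBmem v y).mp hyB
        constructor
        · rw [hAf_def]
          simp only []
          rw [hBshift_u, hBshift v g hg, himgu_invol, Finset.union_comm]
        · exact hP_addu _ (hP_pi v hv g hg)
    have hvAv : ∀ v : Vec (4 * t), v ∈ Af v := by
      intro v
      exact Finset.mem_union.mpr (Or.inl (hvBv v))
    have hvuAv : ∀ v : Vec (4 * t), v + u ∈ Af v := by
      intro v
      exact Finset.mem_union.mpr (Or.inr (Finset.mem_image_of_mem _ (hvBv v)))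
    -- all classes have size divisible by 4
    have hAcard4 : ∀ v ∈ P, 4 ∣ (Af v).card := by
      intro v hv
      obtain ⟨hvKF, hv0, hvu⟩ := (hmemP v).mp hv
      have hAdvd : (Af v).card ∣ 2 ^ D := by
        by_cases hdisj : Disjoint (Bf v) ((Bf v).image (fun x => x + u))
        · have hcardA : (Af v).card = 2 * (Bf v).card := by
            rw [hAf_def]
            simp only []
            rw [Finset.card_union_of_disjoint hdisj,
              Finset.card_image_of_injective _ (add_left_injective u)]
            ring
          have hDD : (2 : ℕ) ^ D = 2 * 2 ^ (D - 1) := by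
            conv_lhs => rw [show D = (D - 1) + 1 by omega]
            rw [pow_succ, mul_comm]
          rw [hcardA, hDD]
          exact Nat.mul_dvd_mul_left 2 (hBdvd v hvKF)
        · have himg_eq : (Bf v).image (fun x => x + u) = Bf v := by
            rw [Finset.not_disjoint_iff] at hdisj
            obtain ⟨x, hx1, hx2⟩ := hdisj
            obtain ⟨g, hg, hgx⟩ := (hBmem v x).mp hx1
            obtain ⟨y, hy, hyx⟩ := Finset.mem_image.mp hx2
            obtain ⟨h, hh, hhy⟩ := (hBmem v y).mp hy
            -- π_g v = π_h v + u
            have hcol : permAct (H.π g) v = permAct (H.π h) v + u := by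
              rw [hgx, ← hyx, hhy]
            apply Finset.eq_of_subset_of_card_le
            · intro w hw
              obtain ⟨y', hy', rfl⟩ := Finset.mem_image.mp hw
              obtain ⟨g1, hg1, rfl⟩ := (hBmem v y').mp hy'
              obtain ⟨g', hg'S, hgg', hg'g⟩ := hinv g hg
              refine (hBmem v _).mpr ⟨H.mul (H.mul g1 g') h,
                hmulmemS _ (hmulmemS g1 hg1 g' hg'S) h hh, ?_⟩
              have hstep : permAct (H.π g') (permAct (H.π h) v)
                  = v + u := by
                have hhv : permAct (H.π h) v = permAct (H.π g) v + u := by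
                  rw [hcol, haddu_cancel]
                rw [hhv, hpermAdd, hpermU, ← hpermComp (H.π g') (H.π g) v,
                  ← hπmulS g' hg'S g hg, hg'g, H.π_zero, hpermOne]
              rw [hπmulS _ (hmulmemS g1 hg1 g' hg'S) h hh,
                hπmulS g1 hg1 g' hg'S, hpermComp, hpermComp, hstep, hpermAdd, hpermU]
            · rw [Finset.card_image_of_injective _ (add_left_injective u)]
          have hAeq : Af v = Bf v := by
            rw [hAf_def]
            simp only []
            rw [himg_eq, Finset.union_self]
          rw [hAeq]
          refine dvd_trans (hBdvd v hvKF) ⟨2, ?_⟩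
          conv_lhs => rw [show D = (D - 1) + 1 by omega]
          rw [pow_succ]
      obtain ⟨k, hk, hkA⟩ := (Nat.dvd_prime_pow Nat.prime_two).mp hAdvd
      have hvne : v ≠ v + u := by
        intro hc
        apply hu0
        have := congrArg (fun x => x + u) hc
        simpa [haddu_cancel, vec_add_self] using this.symm
      have hge2 : 2 ≤ (Af v).card := by
        have hsub : ({v, v + u} : Finset (Vec (4 * t))) ⊆ Af v := by
          intro x hxm
          rcases Finset.mem_insert.mp hxm with hxm | hxm
          · rw [hxm]; exact hvAv v
          · rw [Finset.mem_singleton.mp hxm]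
            exact hvuAv v
        calc 2 = ({v, v + u} : Finset (Vec (4 * t))).card := by
              rw [Finset.card_insert_of_notMem (Finset.notMem_singleton.mpr hvne),
                Finset.card_singleton]
          _ ≤ (Af v).card := Finset.card_le_card hsub
      have hne2 : (Af v).card ≠ 2 := by
        intro hc2
        have hsub : ({v, v + u} : Finset (Vec (4 * t))) ⊆ Af v := by
          intro x hxm
          rcases Finset.mem_insert.mp hxm with hxm | hxm
          · rw [hxm]; exact hvAv v
          · rw [Finset.mem_singleton.mp hxm]
            exact hvuAv v
        have heq2 : ({v, v + u} : Finset (Vec (4 * t))) = Af v := by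
          apply Finset.eq_of_subset_of_card_le hsub
          rw [hc2, Finset.card_insert_of_notMem (Finset.notMem_singleton.mpr hvne),
            Finset.card_singleton]
        obtain ⟨g, hgS, hg1, hg2⟩ := hno v hvKF hv0 hvu
        have : permAct (H.π g) v ∈ Af v :=
          Finset.mem_union.mpr (Or.inl ((hBmem v _).mpr ⟨g, hgS, rfl⟩))
        rw [← heq2] at this
        rcases Finset.mem_insert.mp this with hc | hc
        · exact hg1 hc
        · exact hg2 (Finset.mem_singleton.mp hc)
      -- (Af v).card = 2^k, ≥ 2, ≠ 2 ⇒ k ≥ 2 ⇒ 4 ∣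
      rw [hkA]
      rw [hkA] at hge2 hne2
      have hk2 : 2 ≤ k := by
        by_contra hklt
        interval_cases k
        · simp at hge2
        · simp at hne2
      exact ⟨2 ^ (k - 2), by
        rw [show (4 : ℕ) = 2 ^ 2 by norm_num, ← pow_add]
        congr 1
        omega⟩
    -- partition of P into classes
    have hPcard : P.card = 2 ^ D - 2 := by
      have hPeq : P = KF \ {0, u} := by
        ext x
        rw [hmemP, Finset.mem_sdiff, Finset.mem_insert, Finset.mem_singleton]
        tauto
      rw [hPeq, Finset.card_sdiff_of_subset (by
        intro x hx
        rcases Finset.mem_insert.mp hx with h | h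
        · rw [h]; exact h0KF
        · rw [Finset.mem_singleton.mp h]; exact huKF), hKFcard, hWuf]
    have hdvd4 : 4 ∣ P.card := by
      rw [Finset.card_eq_sum_card_fiberwise (s := P) (f := Af) (t := P.image Af)
        (fun x hx => Finset.mem_image_of_mem _ hx)]
      apply Finset.dvd_sum
      intro A0 hA0
      obtain ⟨v0, hv0, rfl⟩ := Finset.mem_image.mp hA0
      have hfeq : P.filter (fun x => Af x = Af v0) = Af v0 := by
        ext x
        constructor
        · intro hx
          obtain ⟨hxP, hxA⟩ := Finset.mem_filter.mp hx
          rw [← hxA]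
          exact hvAv x
        · intro hx
          exact Finset.mem_filter.mpr ⟨(hAstab v0 hv0 x hx).2, (hAstab v0 hv0 x hx).1⟩
      rw [hfeq]
      exact hAcard4 v0 hv0
    rw [hPcard] at hdvd4
    have h2D : 2 ^ D = 4 * 2 ^ (D - 2) := by
      rw [show (4 : ℕ) = 2 ^ 2 by norm_num, ← pow_add]
      congr 1
      omega
    have hpow_pos : 0 < 2 ^ (D - 2) := Nat.pow_pos (by norm_num)
    omega
  -- normalize the eigenvector so that it vanishes at i0
  obtain ⟨z0, hz0KF, hz00, hz0u, hz0eig⟩ := heig'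
  have heignorm : ∃ z ∈ KF, z ≠ 0 ∧ z ≠ u ∧ z i0 = 0 ∧
      (∀ g ∈ S, permAct (H.π g) z = z ∨ permAct (H.π g) z = z + u) := by
    rcases zmod2_cases (z0 i0) with hz0i | hz0i
    · exact ⟨z0, hz0KF, hz00, hz0u, hz0i, hz0eig⟩
    · refine ⟨z0 + u, hKF_addcl z0 hz0KF u huKF, ?_, ?_, ?_, ?_⟩
      · intro hc
        apply hz0u
        have := congrArg (fun x => x + u) hc
        simpa [haddu_cancel, zero_add] using this
      · intro hc
        apply hz00
        have := congrArg (fun x => x + u) hc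
        simpa [haddu_cancel, vec_add_self] using this
      · show z0 i0 + u i0 = 0
        have hui0 : u i0 = 1 := rfl
        rw [hz0i, hui0]
        decide
      · intro g hg
        rcases hz0eig g hg with hc | hc
        · left
          rw [hpermAdd, hpermU, hc]
        · right
          rw [hpermAdd, hpermU, hc]
  obtain ⟨z, hzKF, hz0, hzu, hzi0, hzeig⟩ := heignorm
  -- the character ε attached to the eigenvector z
  have hzS : z ∈ S := (memS z).mpr (hkerC z ((memKF z).mp hzKF))
  set ε : Vec (4 * t) → ZMod 2 := fun g => z (φ g) with hε_def
  have hπz : ∀ g ∈ S, permAct (H.π g) z = z + (fun _ => ε g) := by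
    intro g hg
    rcases hzeig g hg with hfix | hflip
    · have hε0 : ε g = 0 := by
        have h1 : z (φ g) = z i0 := congrFun hfix i0
        rw [hε_def]; simp only []; rw [h1, hzi0]
      rw [hε0]
      funext i
      show permAct (H.π g) z i = z i + 0
      rw [add_zero, hfix]
    · have hε1 : ε g = 1 := by
        have h1 : z (φ g) = z i0 + u i0 := congrFun hflip i0
        have hui0 : u i0 = 1 := rfl
        rw [hε_def]; simp only []; rw [h1, hzi0, hui0, zero_add]
      rw [hε1]
      exact hflip
  have hεadd : ∀ g ∈ S, ∀ h ∈ S, ε (H.mul g h) = ε g + ε h := by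
    intro g hg h hh
    have h1 : permAct (H.π (H.mul g h)) z = z + (fun _ => ε (H.mul g h)) :=
      hπz _ (hmulmemS g hg h hh)
    have h2 : permAct (H.π (H.mul g h)) z = z + (fun _ => ε g + ε h) := by
      rw [hπmulS g hg h hh, hpermComp, hπz h hh, hpermAdd, hπz g hg]
      funext i
      show (z i + ε g) + ε h = z i + (ε g + ε h)
      ring
    have h3 := congrFun (h1.symm.trans h2) i0
    have h4 : z i0 + ε (H.mul g h) = z i0 + (ε g + ε h) := h3
    exact add_left_cancel h4
  have hφ0 : φ (0 : Vec (4 * t)) = i0 := by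
    rw [hφ_def]; simp [H.π_zero]
  have hε0 : ε (0 : Vec (4 * t)) = 0 := by
    rw [hε_def]; simp only []; rw [hφ0, hzi0]
  have hεpow : ∀ x ∈ S, ∀ i : ℕ, ε (H.pow x i) = (i : ZMod 2) * ε x := by
    intro x hx i
    induction i with
    | zero => rw [Nat.cast_zero, zero_mul]; exact hε0
    | succ m ih =>
      show ε (H.mul x (H.pow x m)) = _
      rw [hεadd x hx _ (hpowmem x hx m), ih]
      push_cast
      ring
  have hψz : ∀ g : Vec (4 * t), ψ (H.mul g z) = sgn (ε g) * ψ g := by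
    intro g
    have h1 : H.mul g z i0 = g i0 + z (φ g) := rfl
    rw [hψ_def]; simp only []
    rw [h1, sgn_add, mul_comm]
  set zz := H.mul z z with hzz_def
  have hzzS : zz ∈ S := hmulmemS z hzS z hzS
  have hψzz : ∀ g ∈ S, ψ (H.mul g zz) = sgn (ε z) * ψ g := by
    intro g hg
    have h1 : H.mul g zz = H.mul (H.mul g z) z :=
      (hassoc g ((memS g).mp hg) z ((memS z).mp hzS) z).symm
    rw [h1, hψz (H.mul g z), hψz g, hεadd g hg z hzS, sgn_add]
    linear_combination (sgn (ε z) * ψ g) * sgn_sq (ε g)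
  have hsum_zz : ∑ g ∈ S, ψ g * ψ (H.mul g zz) = sgn (ε z) * (8 * t) := by
    rw [Finset.sum_congr rfl (fun g hg => by
      rw [hψzz g hg,
        show ψ g * (sgn (ε z) * ψ g) = sgn (ε z) * (ψ g * ψ g) by ring, hψsq g, mul_one])]
    rw [Finset.sum_const, cardS]
    push_cast
    ring
  have hzz0u : zz = 0 ∨ zz = u := by
    by_contra hc
    push_neg at hc
    have h0 := hcorr zz hzzS hc.1 hc.2
    rw [hsum_zz] at h0
    rcases sgn_cases (ε z) with h | h <;> rw [h] at h0 <;> omega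
  have hεz0_of : zz = 0 → ε z = 0 := by
    intro h0
    have h1 : ∑ g ∈ S, ψ g * ψ (H.mul g zz) = 8 * t := by
      rw [Finset.sum_congr rfl (fun g hg => by rw [h0, hmul0, hψsq g])]
      rw [Finset.sum_const, cardS]
      push_cast
      ring
    rw [hsum_zz] at h1
    rcases zmod2_cases (ε z) with h | h
    · exact h
    · rw [h, sgn_one] at h1
      omega
  have hεz1_of : zz = u → ε z = 1 := by
    intro h0
    have h1 : ∑ g ∈ S, ψ g * ψ (H.mul g zz) = - (8 * t) := by
      rw [Finset.sum_congr rfl (fun g hg => by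
        rw [h0, hmulu, add_comm, hψu, show ψ g * - ψ g = - (ψ g * ψ g) by ring, hψsq g])]
      rw [Finset.sum_const, cardS]
      push_cast
      ring
    rw [hsum_zz] at h1
    rcases zmod2_cases (ε z) with h | h
    · rw [h, sgn_zero] at h1
      omega
    · exact h
  have hεnt : ∃ g ∈ S, ε g = 1 := by
    by_contra hc
    push_neg at hc
    apply hz0
    funext i
    obtain ⟨g, hg, hφg⟩ := hφsurj i
    show z i = 0
    rw [← hφg]
    rcases zmod2_cases (ε g) with h | h
    · exact h
    · exact absurd h (hc g hg)
  -- decompose z in the parametrization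
  obtain ⟨m, hm4, j₀, hj₀2, hzp⟩ := hpsurj z hzS
  have hzz_pow : zz = H.pow a ((2 * m) % (4 * t)) := by
    rw [hzz_def, hzp, hpmul, hp_red]
    have hj : (j₀ + j₀) % 2 = 0 := by omega
    rw [hj, hpi0]
    congr 1
    rw [two_mul]
  have hm_cases : m = 0 ∨ m = 2 * t ∨ m = t ∨ m = 3 * t := by
    have hmod := Nat.mod_add_div (2 * m) (4 * t)
    have hmlt : (2 * m) % (4 * t) < 4 * t := Nat.mod_lt (2 * m) (by omega)
    have hqlt : (2 * m) / (4 * t) < 2 := by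
      apply Nat.div_lt_of_lt_mul
      omega
    generalize hqdef : (2 * m) / (4 * t) = q at hqlt hmod
    have hq01 : q = 0 ∨ q = 1 := by omega
    have hrval : (2 * m) % (4 * t) = 0 ∨ (2 * m) % (4 * t) = 2 * t := by
      rcases hzz0u with h0 | h0 <;> rw [h0] at hzz_pow
      · left
        exact (hpowa_inj _ hmlt 0 (by omega) (by rw [← hzz_pow]; rfl)).symm ▸ rfl
      · right
        exact hpowa_inj _ hmlt (2 * t) (by omega) (by rw [← hzz_pow, hau])
    rcases hq01 with hq | hq <;> rw [hq] at hmod <;> rcases hrval with hr | hr <;>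
      rw [hr] at hmod <;> omega
  -- final case analysis
  rcases Nat.lt_or_ge t 3 with hts | ht3
  · -- t = 1 or t = 2 : the length is a power of two
    have ht12 : t = 1 ∨ t = 2 := by omega
    rcases ht12 with h1 | h1
    · exact ⟨2, by rw [h1]; norm_num⟩
    · exact ⟨3, by rw [h1]; norm_num⟩
  exfalso
  -- the basic sequence attached to a
  have hx_anti : ∀ i, ψ (H.pow a (i + 2 * t)) = - ψ (H.pow a i) := by
    intro i
    rw [hpowa_u i]
    exact hψu _
  have hshuffle : ∀ g ∈ S, ∀ w ∈ S, ∀ d ∈ S,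
      H.mul (H.mul g w) d = H.mul (H.mul g d) w := by
    intro g hg w hw d hd
    rw [hassoc g ((memS g).mp hg) w ((memS w).mp hw) d, hcommS w hw d hd,
      ← hassoc g ((memS g).mp hg) d ((memS d).mp hd) w]
  -- the half-group correlation identity in branch (ii)
  have hT1 : ε z = 1 → ∀ d ∈ S, d ≠ 0 → d ≠ u → ε d = 0 →
      ∑ g ∈ S.filter (fun g => ε g = 0), ψ g * ψ (H.mul g d) = 0 := by
    intro hεz1 d hdS hd0 hdu hεd
    obtain ⟨z', hz'S, hzz', hz'z⟩ := hinv z hzS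
    have hsplit := Finset.sum_filter_add_sum_filter_not S (fun g => ε g = 0)
      (fun g => ψ g * ψ (H.mul g d))
    have hSsum : ∑ g ∈ S, ψ g * ψ (H.mul g d) = 0 := hcorr d hdS hd0 hdu
    have hbij : ∑ g ∈ S.filter (fun g => ¬ ε g = 0), ψ g * ψ (H.mul g d)
        = ∑ g ∈ S.filter (fun g => ε g = 0), ψ g * ψ (H.mul g d) := by
      apply Finset.sum_nbij' (fun g => H.mul g z) (fun g => H.mul g z')
      · intro g hg
        obtain ⟨hgS, hgε⟩ := Finset.mem_filter.mp hg
        have hεg1 : ε g = 1 := by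
          rcases zmod2_cases (ε g) with h | h
          · exact absurd h hgε
          · exact h
        refine Finset.mem_filter.mpr ⟨hmulmemS g hgS z hzS, ?_⟩
        rw [hεadd g hgS z hzS, hεg1, hεz1]
        decide
      · intro g hg
        obtain ⟨hgS, hgε⟩ := Finset.mem_filter.mp hg
        have hεz' : ε z' = 1 := by
          have h1 : ε (H.mul z z') = 0 := by rw [hzz']; exact hε0
          rw [hεadd z hzS z' hz'S, hεz1] at h1
          rcases zmod2_cases (ε z') with h | h
          · rw [h, add_zero] at h1
            exact absurd h1 (by decide)
          · exact h
        refine Finset.mem_filter.mpr ⟨hmulmemS g hgS z' hz'S, ?_⟩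
        rw [hεadd g hgS z' hz'S, hgε, hεz']
        decide
      · intro g hg
        obtain ⟨hgS, _⟩ := Finset.mem_filter.mp hg
        rw [hassoc g ((memS g).mp hgS) z ((memS z).mp hzS) z', hzz', hmul0]
      · intro g hg
        obtain ⟨hgS, _⟩ := Finset.mem_filter.mp hg
        rw [hassoc g ((memS g).mp hgS) z' ((memS z').mp hz'S) z, hz'z, hmul0]
      · intro g hg
        obtain ⟨hgS, hgε⟩ := Finset.mem_filter.mp hg
        have hεg1 : ε g = 1 := by
          rcases zmod2_cases (ε g) with h | h
          · exact absurd h hgε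
          · exact h
        have e1 : ψ (H.mul g z) = sgn (ε g) * ψ g := hψz g
        have e2 : ψ (H.mul (H.mul g z) d) = sgn (ε (H.mul g d)) * ψ (H.mul g d) := by
          rw [hshuffle g hgS z hzS d hdS]
          exact hψz (H.mul g d)
        rw [e1, e2, hεg1, hεadd g hgS d hdS, hεg1, hεd, add_zero, sgn_one]
        ring
    rw [hbij] at hsplit
    rw [hSsum] at hsplit
    linarith
  -- the cyclic master argument for branch (ii)
  have hcyc : ε z = 1 → ∀ c ∈ S, ε c = 0 → H.pow c (2 * t) = u →
      ((Finset.range (4 * t)).image (H.pow c) = S.filter (fun g => ε g = 0)) →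
      (∀ i, i < 4 * t → ∀ i', i' < 4 * t → H.pow c i = H.pow c i' → i = i') → False := by
    intro hεz1 c hcS hεc hcu himg hcinj
    set w : ℕ → ℤ := fun i => ψ (H.pow c i) with hw_def
    have hwpm : ∀ i, w i = 1 ∨ w i = -1 := fun i => hψpm _
    have hc_anti : ∀ i, w (i + 2 * t) = - w i := by
      intro i
      rw [hw_def]; simp only []
      rw [hpowadd c hcS i (2 * t), hcu, hmulu, add_comm]
      exact hψu _
    have hsum : ∀ k, 0 < k → k < 4 * t → k ≠ 2 * t →
        ∑ i ∈ Finset.range (2 * t), w i * w (i + k) = 0 := by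
      intro k hk0 hk4 hk2t
      have hdS : H.pow c k ∈ S := hpowmem c hcS k
      have hd0 : H.pow c k ≠ 0 := by
        intro hcon
        have hk0' : k = 0 := hcinj k hk4 0 (by omega) (by rw [hcon]; rfl)
        omega
      have hdu : H.pow c k ≠ u := by
        intro hcon
        have : k = 2 * t := hcinj k hk4 (2 * t) (by omega) (by rw [hcon, ← hcu])
        omega
      have hεd : ε (H.pow c k) = 0 := by rw [hεpow c hcS k, hεc, mul_zero]
      have h0 := hT1 hεz1 _ hdS hd0 hdu hεd
      rw [← himg, Finset.sum_image (fun i hi j hj hij =>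
        hcinj i (Finset.mem_range.mp hi) j (Finset.mem_range.mp hj) hij)] at h0
      have h2 : ∑ i ∈ Finset.range (4 * t), w i * w (i + k) = 0 := by
        rw [← h0]
        apply Finset.sum_congr rfl
        intro i _
        rw [hw_def]; simp only []
        rw [hpowadd c hcS i k]
      rw [show 4 * t = 2 * (2 * t) by ring] at h2
      rw [sum_range_double _ (2 * t) (fun i => by
        have e1 : w (i + 2 * t) = - w i := hc_anti i
        have e2 : w (i + 2 * t + k) = - w (i + k) := by
          rw [show i + 2 * t + k = (i + k) + 2 * t by ring]
          exact hc_anti (i + k)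
        rw [e1, e2]
        ring)] at h2
      linarith
    exact no_negaperfect w (2 * t) hwpm hc_anti
      (hsum 1 (by omega) (by omega) (by omega))
      (hsum 2 (by omega) (by omega) (by omega))
  -- ε on the parametrization
  set εa : ZMod 2 := ε a with hεa_def
  set εb : ZMod 2 := ε b with hεb_def
  have hεp : ∀ i j : ℕ, ε (p i j) = (i : ZMod 2) * εa + (j : ZMod 2) * εb := by
    intro i j
    show ε (H.mul (H.pow a i) (H.pow b j)) = _
    rw [hεadd _ (hpowmem a haS i) _ (hpowmem b hbS j), hεpow a haS i, hεpow b hbS j]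
  have hεz_val : ε z = (m : ZMod 2) * εa + (j₀ : ZMod 2) * εb := by rw [hzp]; exact hεp m j₀
  have hnontriv : ¬ (εa = 0 ∧ εb = 0) := by
    rintro ⟨hea, heb⟩
    obtain ⟨g, hgS, hg1⟩ := hεnt
    obtain ⟨i, hi, j, hj, rfl⟩ := hpsurj g hgS
    rw [hεp, hea, heb, mul_zero, mul_zero, add_zero] at hg1
    exact absurd hg1 (by decide)
  -- branch (i): z*z = 0
  have hbranch1 : (m = 0 ∨ m = 2 * t) → False := by
    intro hmeven
    have hzz0 : zz = 0 := by
      rw [hzz_pow]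
      have hexp : (2 * m) % (4 * t) = 0 := by
        rcases hmeven with h | h <;> rw [h]
        · simp
        · rw [show 2 * (2 * t) = 4 * t by ring, Nat.mod_self]
      rw [hexp]
      rfl
    have hj₀1 : j₀ = 1 := by
      have hj01 : j₀ = 0 ∨ j₀ = 1 := by omega
      rcases hj01 with h | h
      · exfalso
        rw [h, hpi0] at hzp
        rcases hmeven with hm' | hm' <;> rw [hm'] at hzp
        · exact hz0 (by rw [hzp]; rfl)
        · exact hzu (by rw [hzp, hau])
      · exact h
    rw [hj₀1] at hzp
    have hεz0 : ε z = 0 := hεz0_of hzz0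
    have hmcast : ((m : ℕ) : ZMod 2) = 0 := by
      rcases hmeven with h | h <;> rw [h]
      · simp
      · exact zmod2_natCast_even t
    have hεb0 : εb = 0 := by
      have h1 := hεz_val
      rw [hmcast, hj₀1, zero_mul, Nat.cast_one, one_mul, zero_add, hεz0] at h1
      exact h1.symm
    have hεa1 : εa = 1 := by
      rcases zmod2_cases εa with h | h
      · exact absurd ⟨h, hεb0⟩ hnontriv
      · exact h
    have hzna : ∀ k : ℕ, z ≠ H.pow a k := by
      intro k hcon
      have h1 : p m 1 = p (k % (4 * t)) 0 := by
        rw [← hzp, hcon, hpowa_mod, hpi0]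
      have := (hpinj m hm4 _ (Nat.mod_lt _ (by omega)) 1 (by omega) 0 (by omega) h1).2
      omega
    set q : ℕ → ℕ → Vec (4 * t) := fun i j => H.mul (H.pow a i) (H.pow z j) with hq_def
    have hq0 : ∀ i, q i 0 = H.pow a i := by
      intro i; show H.mul _ (H.pow z 0) = _; exact hmul0 _
    have hq1 : ∀ i, q i 1 = H.mul (H.pow a i) z := by
      intro i; show H.mul _ (H.pow z 1) = _; rw [hpow1]
    have hqS : ∀ i j, q i j ∈ S := fun i j =>
      hmulmemS _ (hpowmem a haS i) _ (hpowmem z hzS j)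
    have hkeyz : ∀ i i' : ℕ, H.pow a i = H.mul (H.pow a i') z → False := by
      intro i i' heq
      have h1 : H.mul (H.pow a (4 * t - i' % (4 * t))) (H.pow a i) = z := by
        rw [heq, hpowa_mod i',
          ← hassoc _ ((memS _).mp (hpowmem a haS _)) _ ((memS _).mp (hpowmem a haS _)) z,
          ← hpowadd a haS,
          show 4 * t - i' % (4 * t) + i' % (4 * t) = 4 * t by
            have := Nat.mod_lt i' (y := 4 * t) (by omega)
            omega,
          ha4t, h0mul]
      rw [← hpowadd a haS] at h1
      exact hzna _ h1.symm
    have hqinj : ∀ i, i < 4 * t → ∀ i', i' < 4 * t → ∀ j, j < 2 → ∀ j', j' < 2 →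
        q i j = q i' j' → i = i' ∧ j = j' := by
      intro i hi i' hi' j hj j' hj' heq
      have hj01 : j = 0 ∨ j = 1 := by omega
      have hj01' : j' = 0 ∨ j' = 1 := by omega
      rcases hj01 with rfl | rfl <;> rcases hj01' with rfl | rfl
      · rw [hq0, hq0] at heq
        exact ⟨hpowa_inj i hi i' hi' heq, rfl⟩
      · exfalso
        rw [hq0, hq1] at heq
        exact hkeyz i i' heq
      · exfalso
        rw [hq1, hq0] at heq
        exact hkeyz i' i heq.symm
      · rw [hq1, hq1] at heq
        have h2 : H.mul z (H.pow a i) = H.mul z (H.pow a i') := by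
          rw [hcommS z hzS _ (hpowmem a haS i), hcommS z hzS _ (hpowmem a haS i')]
          exact heq
        exact ⟨hpowa_inj i hi i' hi' (hLinj z h2), rfl⟩
    have hq1p : ∀ k : ℕ, q k 1 = p (k + m) 1 := by
      intro k
      rw [hq1, hzp, hpi1, hpi1,
        ← hassoc _ ((memS _).mp (hpowmem a haS k)) _ ((memS _).mp (hpowmem a haS m)) b,
        ← hpowadd a haS k m]
    have hqsurj : ∀ g ∈ S, ∃ i, i < 4 * t ∧ ∃ j, j < 2 ∧ g = q i j := by
      intro g hg
      obtain ⟨i, hi, j, hj, rfl⟩ := hpsurj g hg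
      have hj01 : j = 0 ∨ j = 1 := by omega
      rcases hj01 with rfl | rfl
      · exact ⟨i, hi, 0, by omega, by rw [hq0, hpi0]⟩
      · refine ⟨(i + 4 * t - m) % (4 * t), Nat.mod_lt _ (by omega), 1, by omega, ?_⟩
        have h1 : q ((i + 4 * t - m) % (4 * t)) 1 = q (i + 4 * t - m) 1 := by
          rw [hq1, hq1, ← hpowa_mod]
        rw [h1, hq1p, show i + 4 * t - m + m = i + 4 * t by omega,
          hp_red (i + 4 * t) 1, Nat.add_mod_right, Nat.mod_eq_of_lt hi]
    have hSimageq : S = ((Finset.range (4 * t)) ×ˢ (Finset.range 2)).image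
        (fun ij : ℕ × ℕ => q ij.1 ij.2) := by
      apply Finset.Subset.antisymm
      · intro g hg
        obtain ⟨i, hi, j, hj, rfl⟩ := hqsurj g hg
        exact Finset.mem_image.mpr ⟨(i, j), Finset.mem_product.mpr
          ⟨Finset.mem_range.mpr hi, Finset.mem_range.mpr hj⟩, rfl⟩
      · intro g hg
        obtain ⟨ij, _, rfl⟩ := Finset.mem_image.mp hg
        exact hqS _ _
    have hsumq : ∀ F : Vec (4 * t) → ℤ,
        ∑ g ∈ S, F g = ∑ i ∈ Finset.range (4 * t), (F (q i 0) + F (q i 1)) := by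
      intro F
      rw [hSimageq, Finset.sum_image ?_, Finset.sum_product]
      · apply Finset.sum_congr rfl
        intro i _
        rw [show (2 : ℕ) = 1 + 1 from rfl, Finset.sum_range_succ, Finset.sum_range_one]
      · intro v hv w hw hvw
        obtain ⟨hv1, hv2⟩ := Finset.mem_product.mp hv
        obtain ⟨hw1, hw2⟩ := Finset.mem_product.mp hw
        obtain ⟨e1, e2⟩ := hqinj v.1 (Finset.mem_range.mp hv1) w.1 (Finset.mem_range.mp hw1)
          v.2 (Finset.mem_range.mp hv2) w.2 (Finset.mem_range.mp hw2) hvw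
        exact Prod.ext e1 e2
    have hyval : ∀ i : ℕ, ψ (H.mul (H.pow a i) z) = sgn ((i : ZMod 2)) * ψ (H.pow a i) := by
      intro i
      rw [hψz (H.pow a i), hεpow a haS i]
      rw [show ε a = εa from rfl, hεa1, mul_one]
    have hXsum : ∀ l : ℕ, 0 < l → 2 * l < 4 * t → 2 * l ≠ 2 * t →
        ∑ i ∈ Finset.range (2 * t), ψ (H.pow a (2 * i)) * ψ (H.pow a (2 * i + 2 * l)) = 0 := by
      intro l hl0 hl4 hl2
      have hdS : H.pow a (2 * l) ∈ S := hpowmem a haS _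
      have hd0 : H.pow a (2 * l) ≠ 0 := hapos _ (by omega) hl4
      have hdu : H.pow a (2 * l) ≠ u := by
        intro hcon
        rw [← hau] at hcon
        exact hl2 (hpowa_inj _ hl4 (2 * t) (by omega) hcon)
      have hid1 := hcorr _ hdS hd0 hdu
      rw [hsumq (fun g => ψ g * ψ (H.mul g (H.pow a (2 * l))))] at hid1
      have hone : ∀ i ∈ Finset.range (4 * t),
          (ψ (q i 0) * ψ (H.mul (q i 0) (H.pow a (2 * l)))
            + ψ (q i 1) * ψ (H.mul (q i 1) (H.pow a (2 * l))))
          = 2 * (ψ (H.pow a i) * ψ (H.pow a (i + 2 * l))) := by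
        intro i _
        have e0 : H.mul (q i 0) (H.pow a (2 * l)) = H.pow a (i + 2 * l) := by
          rw [hq0, ← hpowadd a haS]
        have e1 : H.mul (q i 1) (H.pow a (2 * l)) = H.mul (H.pow a (i + 2 * l)) z := by
          rw [hq1, hshuffle _ (hpowmem a haS i) z hzS _ hdS, ← hpowadd a haS]
        rw [e0, e1, hq0, hq1, hyval i, hyval (i + 2 * l), zmod2_natCast_add_even]
        linear_combination (ψ (H.pow a i) * ψ (H.pow a (i + 2 * l))) * sgn_sq ((i : ZMod 2))
      rw [Finset.sum_congr rfl hone] at hid1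
      have hd'0 : q (2 * l) 1 ≠ 0 := by
        intro hcon
        have h0q : (0 : Vec (4 * t)) = q 0 0 := by rw [hq0]; rfl
        have := (hqinj (2 * l) hl4 0 (by omega) 1 (by omega) 0 (by omega)
          (by rw [hcon, h0q])).2
        omega
      have hd'u : q (2 * l) 1 ≠ u := by
        intro hcon
        have huq : u = q (2 * t) 0 := by rw [hq0, hau]
        have := (hqinj (2 * l) hl4 (2 * t) (by omega) 1 (by omega) 0 (by omega)
          (by rw [hcon, huq])).2
        omega
      have hid2 := hcorr _ (hqS (2 * l) 1) hd'0 hd'u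
      rw [hsumq (fun g => ψ g * ψ (H.mul g (q (2 * l) 1)))] at hid2
      have htwo : ∀ i ∈ Finset.range (4 * t),
          (ψ (q i 0) * ψ (H.mul (q i 0) (q (2 * l) 1))
            + ψ (q i 1) * ψ (H.mul (q i 1) (q (2 * l) 1)))
          = 2 * (sgn ((i : ZMod 2)) * (ψ (H.pow a i) * ψ (H.pow a (i + 2 * l)))) := by
        intro i _
        have e0 : H.mul (q i 0) (q (2 * l) 1) = H.mul (H.pow a (i + 2 * l)) z := by
          rw [hq0, hq1,
            ← hassoc _ ((memS _).mp (hpowmem a haS i)) _ ((memS _).mp (hpowmem a haS (2 * l))) z,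
            ← hpowadd a haS]
        have e1 : H.mul (q i 1) (q (2 * l) 1) = H.pow a (i + 2 * l) := by
          rw [hq1, hq1]
          calc H.mul (H.mul (H.pow a i) z) (H.mul (H.pow a (2 * l)) z)
              = H.mul (H.mul (H.mul (H.pow a i) z) (H.pow a (2 * l))) z := by
                rw [← hassoc (H.mul (H.pow a i) z)
                  ((memS _).mp (hmulmemS _ (hpowmem a haS i) z hzS))
                  (H.pow a (2 * l)) ((memS _).mp hdS) z]
            _ = H.mul (H.mul (H.mul (H.pow a i) (H.pow a (2 * l))) z) z := by
                rw [hshuffle _ (hpowmem a haS i) z hzS _ hdS]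
            _ = H.mul (H.mul (H.pow a i) (H.pow a (2 * l))) (H.mul z z) := by
                rw [hassoc _ ((memS _).mp (hmulmemS _ (hpowmem a haS i) _ hdS)) z
                  ((memS z).mp hzS) z]
            _ = H.pow a (i + 2 * l) := by
                rw [← hzz_def, hzz0, hmul0, ← hpowadd a haS]
        rw [e0, e1, hq0, hq1, hyval i, hyval (i + 2 * l), zmod2_natCast_add_even]
        ring
      rw [Finset.sum_congr rfl htwo] at hid2
      rw [← Finset.mul_sum] at hid1 hid2
      have hG1 : ∑ i ∈ Finset.range (4 * t),
          ψ (H.pow a i) * ψ (H.pow a (i + 2 * l)) = 0 := by linarith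
      have hG2 : ∑ i ∈ Finset.range (4 * t),
          sgn ((i : ZMod 2)) * (ψ (H.pow a i) * ψ (H.pow a (i + 2 * l))) = 0 := by linarith
      have hrange : Finset.range (4 * t) = Finset.range (2 * (2 * t)) := by
        rw [show 2 * (2 * t) = 4 * t by ring]
      rw [hrange] at hG1 hG2
      rw [sum_range_even_odd (fun i => ψ (H.pow a i) * ψ (H.pow a (i + 2 * l))) (2 * t)] at hG1
      rw [sum_range_even_odd
        (fun i => sgn ((i : ZMod 2)) * (ψ (H.pow a i) * ψ (H.pow a (i + 2 * l)))) (2 * t)] at hG2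
      have hev : ∀ i : ℕ, sgn (((2 * i : ℕ) : ZMod 2)) * (ψ (H.pow a (2 * i)) * ψ (H.pow a (2 * i + 2 * l)))
          = ψ (H.pow a (2 * i)) * ψ (H.pow a (2 * i + 2 * l)) := by
        intro i
        rw [zmod2_natCast_even, sgn_zero, one_mul]
      have hod : ∀ i : ℕ, sgn (((2 * i + 1 : ℕ) : ZMod 2)) * (ψ (H.pow a (2 * i + 1)) * ψ (H.pow a (2 * i + 1 + 2 * l)))
          = - (ψ (H.pow a (2 * i + 1)) * ψ (H.pow a (2 * i + 1 + 2 * l))) := by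
        intro i
        rw [zmod2_natCast_odd, sgn_one]
        ring
      rw [Finset.sum_congr rfl (fun i _ => hev i),
        Finset.sum_congr rfl (fun i _ => hod i), Finset.sum_neg_distrib] at hG2
      linarith
    -- conclude branch (i)
    apply no_negaperfect (fun i => ψ (H.pow a (2 * i))) t (fun i => hψpm _)
      (fun i => by
        show ψ (H.pow a (2 * (i + t))) = - ψ (H.pow a (2 * i))
        rw [show 2 * (i + t) = 2 * i + 2 * t by ring]
        exact hx_anti (2 * i))
    · have h1 := hXsum 1 (by omega) (by omega) (by omega)
      have h2 := sum_range_double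
        (fun i => ψ (H.pow a (2 * i)) * ψ (H.pow a (2 * i + 2 * 1))) t (fun i => by
          show ψ (H.pow a (2 * (i + t))) * ψ (H.pow a (2 * (i + t) + 2 * 1)) = _
          rw [show 2 * (i + t) = 2 * i + 2 * t by ring,
            show 2 * i + 2 * t + 2 * 1 = (2 * i + 2 * 1) + 2 * t by ring,
            hx_anti (2 * i), hx_anti (2 * i + 2 * 1)]
          ring)
      rw [h1] at h2
      have h3 : ∑ i ∈ Finset.range t,
          ψ (H.pow a (2 * i)) * ψ (H.pow a (2 * i + 2 * 1)) = 0 := by linarith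
      rw [← h3]
      apply Finset.sum_congr rfl
      intro i _
      show ψ (H.pow a (2 * i)) * ψ (H.pow a (2 * (i + 1)))
        = ψ (H.pow a (2 * i)) * ψ (H.pow a (2 * i + 2 * 1))
      rw [show 2 * (i + 1) = 2 * i + 2 * 1 by ring]
    · have h1 := hXsum 2 (by omega) (by omega) (by omega)
      have h2 := sum_range_double
        (fun i => ψ (H.pow a (2 * i)) * ψ (H.pow a (2 * i + 2 * 2))) t (fun i => by
          show ψ (H.pow a (2 * (i + t))) * ψ (H.pow a (2 * (i + t) + 2 * 2)) = _
          rw [show 2 * (i + t) = 2 * i + 2 * t by ring,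
            show 2 * i + 2 * t + 2 * 2 = (2 * i + 2 * 2) + 2 * t by ring,
            hx_anti (2 * i), hx_anti (2 * i + 2 * 2)]
          ring)
      rw [h1] at h2
      have h3 : ∑ i ∈ Finset.range t,
          ψ (H.pow a (2 * i)) * ψ (H.pow a (2 * i + 2 * 2)) = 0 := by linarith
      rw [← h3]
      apply Finset.sum_congr rfl
      intro i _
      show ψ (H.pow a (2 * i)) * ψ (H.pow a (2 * (i + 2)))
        = ψ (H.pow a (2 * i)) * ψ (H.pow a (2 * i + 2 * 2))
      rw [show 2 * (i + 2) = 2 * i + 2 * 2 by ring]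
  -- branch (ii): z*z = u
  have hcast2 : ∀ i : ℕ, ((i : ℕ) : ZMod 2) = ((i % 2 : ℕ) : ZMod 2) := by
    intro i
    conv_lhs => rw [show i = i % 2 + 2 * (i / 2) by omega]
    rw [zmod2_natCast_add_even]
  have hbranch2 : (m = t ∨ m = 3 * t) → False := by
    intro hmodd
    have hzzu : zz = u := by
      rw [hzz_pow]
      have hexp : (2 * m) % (4 * t) = 2 * t := by
        rcases hmodd with h | h <;> rw [h]
        · exact Nat.mod_eq_of_lt (by omega)
        · rw [show 2 * (3 * t) = 2 * t + 4 * t by ring, Nat.add_mod_right]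
          exact Nat.mod_eq_of_lt (by omega)
      rw [hexp, hau]
    have hεz1 : ε z = 1 := hεz1_of hzzu
    rcases zmod2_cases εa with hεa | hεa <;> rcases zmod2_cases εb with hεb | hεb
    · exact hnontriv ⟨hεa, hεb⟩
    -- case εa = 0, εb = 1 : cyclic subgroup ⟨a⟩
    · apply hcyc hεz1 a haS (show ε a = 0 from hεa) hau ?_ hpowa_inj
      apply Finset.Subset.antisymm
      · intro g hg
        obtain ⟨i, hi, rfl⟩ := Finset.mem_image.mp hg
        refine Finset.mem_filter.mpr ⟨hpowmem a haS i, ?_⟩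
        rw [hεpow a haS i, show ε a = εa from rfl, hεa, mul_zero]
      · intro g hg
        obtain ⟨hgS, hgε⟩ := Finset.mem_filter.mp hg
        obtain ⟨i, hi, j, hj, rfl⟩ := hpsurj g hgS
        rw [hεp, hεa, mul_zero, zero_add, hεb, mul_one] at hgε
        have hj0 : j = 0 := by
          have hj01 : j = 0 ∨ j = 1 := by omega
          rcases hj01 with h | h
          · exact h
          · rw [h, Nat.cast_one] at hgε
            exact absurd hgε (by decide)
        rw [hj0, hpi0]
        exact Finset.mem_image.mpr ⟨i, Finset.mem_range.mpr hi, rfl⟩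
    -- case εa = 1, εb = 0 : parity contradiction
    · have hmo : ((m : ℕ) : ZMod 2) = 1 := by
        have h1 := hεz_val
        rw [hεa, hεb, mul_one, mul_zero, add_zero, hεz1] at h1
        exact h1.symm
      have hmodd2 : m % 2 = 1 := by
        rw [hcast2 m] at hmo
        have hm01 : m % 2 = 0 ∨ m % 2 = 1 := by omega
        rcases hm01 with h | h
        · rw [h] at hmo
          exact absurd hmo (by decide)
        · exact h
      have htodd : t % 2 = 1 := by
        rcases hmodd with h | h <;> omega
      have hbu : b ≠ u := by
        intro hcon
        exact hbna (2 * t) (by rw [hcon, hau])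
      have hsum0 := hT1 hεz1 b hbS hb0 hbu (show ε b = 0 from hεb)
      have himg : S.filter (fun g => ε g = 0)
          = ((Finset.range (2 * t)) ×ˢ (Finset.range 2)).image
            (fun ij : ℕ × ℕ => p (2 * ij.1) ij.2) := by
        apply Finset.Subset.antisymm
        · intro g hg
          obtain ⟨hgS, hgε⟩ := Finset.mem_filter.mp hg
          obtain ⟨i, hi, j, hj, rfl⟩ := hpsurj g hgS
          rw [hεp, hεa, hεb, mul_one, mul_zero, add_zero] at hgε
          have hie : i % 2 = 0 := by
            rw [hcast2 i] at hgε
            have hi01 : i % 2 = 0 ∨ i % 2 = 1 := by omega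
            rcases hi01 with h | h
            · exact h
            · rw [h] at hgε
              exact absurd hgε (by decide)
          refine Finset.mem_image.mpr ⟨(i / 2, j), Finset.mem_product.mpr
            ⟨Finset.mem_range.mpr (by omega), Finset.mem_range.mpr hj⟩, ?_⟩
          show p (2 * (i / 2)) j = p i j
          rw [show 2 * (i / 2) = i by omega]
        · intro g hg
          obtain ⟨ij, _, rfl⟩ := Finset.mem_image.mp hg
          refine Finset.mem_filter.mpr ⟨hpS _ _, ?_⟩
          rw [hεp, hεa, hεb, mul_one, mul_zero, add_zero, zmod2_natCast_even]
      rw [himg, Finset.sum_image ?_, Finset.sum_product] at hsum0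
      swap
      · intro v hv w hw hvw
        obtain ⟨hv1, hv2⟩ := Finset.mem_product.mp hv
        obtain ⟨hw1, hw2⟩ := Finset.mem_product.mp hw
        have hkey := hpinj (2 * v.1) (by have := Finset.mem_range.mp hv1; omega)
          (2 * w.1) (by have := Finset.mem_range.mp hw1; omega)
          v.2 (Finset.mem_range.mp hv2) w.2 (Finset.mem_range.mp hw2) hvw
        exact Prod.ext (by omega) hkey.2
      have hpowb2 : H.pow b 2 = H.mul b b := by
        show H.mul b (H.pow b 1) = _
        rw [hpow1]
      have hFb : ∀ i : ℕ, ψ (p i 1) * ψ (H.mul (p i 1) b)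
          = ψ (p i 0) * ψ (H.mul (p i 0) b) := by
        intro i
        have e1 : H.mul (p i 1) b = p i 0 := by
          rw [hpi1, hassoc _ ((memS _).mp (hpowmem a haS i)) b ((memS b).mp hbS) b,
            ← hpowb2, hb2, hmul0, hpi0]
        have e2 : H.mul (p i 0) b = p i 1 := by rw [hpi0, ← hpi1]
        rw [e1, e2]
        ring
      have hexp : ∀ i ∈ Finset.range (2 * t), (∑ j ∈ Finset.range 2,
          ψ (p (2 * i) j) * ψ (H.mul (p (2 * i) j) b))
          = 2 * (ψ (p (2 * i) 0) * ψ (H.mul (p (2 * i) 0) b)) := by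
        intro i _
        rw [show (2 : ℕ) = 1 + 1 from rfl, Finset.sum_range_succ, Finset.sum_range_one,
          hFb (2 * i)]
        ring
      rw [Finset.sum_congr rfl hexp, ← Finset.mul_sum] at hsum0
      have hper : ∀ i : ℕ, ψ (p (2 * (i + t)) 0) * ψ (H.mul (p (2 * (i + t)) 0) b)
          = ψ (p (2 * i) 0) * ψ (H.mul (p (2 * i) 0) b) := by
        intro i
        have e1 : p (2 * (i + t)) 0 = u + p (2 * i) 0 := by
          rw [hpi0, hpi0, show 2 * (i + t) = 2 * i + 2 * t by ring]
          exact hpowa_u (2 * i)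
        have e2 : H.mul (u + p (2 * i) 0) b = u + H.mul (p (2 * i) 0) b := by
          rw [← humul (p (2 * i) 0),
            hassoc u ((memS u).mp huS) _ ((memS _).mp (hpS (2 * i) 0)) b,
            humul]
        rw [e1, e2, hψu, hψu]
        ring
      have hdouble := sum_range_double
        (fun i => ψ (p (2 * i) 0) * ψ (H.mul (p (2 * i) 0) b)) t hper
      rw [hdouble] at hsum0
      have hzero : ∑ i ∈ Finset.range t,
          ψ (p (2 * i) 0) * ψ (H.mul (p (2 * i) 0) b) = 0 := by linarith
      obtain ⟨k, hk, _⟩ := pm_of_sum_zero _ t (fun i _ => by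
        rcases hψpm (p (2 * i) 0) with h | h <;>
          rcases hψpm (H.mul (p (2 * i) 0) b) with h' | h' <;>
          rw [h, h'] <;> norm_num) hzero
      omega
    -- case εa = 1, εb = 1 : cyclic subgroup ⟨a*b⟩
    · set c : Vec (4 * t) := H.mul a b with hc_def
      have hcS : c ∈ S := hmulmemS a haS b hbS
      have hεc : ε c = 0 := by
        rw [hc_def, hεadd a haS b hbS, show ε a = εa from rfl, show ε b = εb from rfl,
          hεa, hεb]
        decide
      have hpowc : ∀ i : ℕ, H.pow c i = H.mul (H.pow a i) (H.pow b i) := by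
        intro i
        induction i with
        | zero =>
          show (0 : Vec (4 * t)) = H.mul 0 0
          rw [hmul0]
        | succ n ih =>
          show H.mul c (H.pow c n) = _
          rw [ih, hc_def]
          have hx := hpowmem a haS n
          have hy := hpowmem b hbS n
          calc H.mul (H.mul a b) (H.mul (H.pow a n) (H.pow b n))
              = H.mul a (H.mul b (H.mul (H.pow a n) (H.pow b n))) :=
                hassoc a ha b hb _
            _ = H.mul a (H.mul (H.mul b (H.pow a n)) (H.pow b n)) := by
                rw [hassoc b hb (H.pow a n) ((memS _).mp hx) (H.pow b n)]
            _ = H.mul a (H.mul (H.mul (H.pow a n) b) (H.pow b n)) := by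
                rw [hcommS b hbS _ hx]
            _ = H.mul a (H.mul (H.pow a n) (H.mul b (H.pow b n))) := by
                rw [hassoc (H.pow a n) ((memS _).mp hx) b hb (H.pow b n)]
            _ = H.mul (H.mul a (H.pow a n)) (H.mul b (H.pow b n)) :=
                (hassoc a ha (H.pow a n) ((memS _).mp hx) _).symm
            _ = H.mul (H.pow a (n + 1)) (H.pow b (n + 1)) := rfl
      have hpowc_p : ∀ i : ℕ, H.pow c i = p i (i % 2) := by
        intro i
        rw [hpowc, hpowb_mod i]
      have hcu : H.pow c (2 * t) = u := by
        rw [hpowc_p, show (2 * t) % 2 = 0 by omega, hpi0, hau]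
      have hcinj : ∀ i, i < 4 * t → ∀ i', i' < 4 * t → H.pow c i = H.pow c i' → i = i' := by
        intro i hi i' hi' heq
        rw [hpowc_p, hpowc_p] at heq
        exact (hpinj i hi i' hi' (i % 2) (by omega) (i' % 2) (by omega) heq).1
      apply hcyc hεz1 c hcS hεc hcu ?_ hcinj
      apply Finset.Subset.antisymm
      · intro g hg
        obtain ⟨i, hi, rfl⟩ := Finset.mem_image.mp hg
        refine Finset.mem_filter.mpr ⟨hpowmem c hcS i, ?_⟩
        rw [hεpow c hcS i, hεc, mul_zero]
      · intro g hg
        obtain ⟨hgS, hgε⟩ := Finset.mem_filter.mp hg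
        obtain ⟨i, hi, j, hj, rfl⟩ := hpsurj g hgS
        rw [hεp, hεa, hεb, mul_one, mul_one] at hgε
        have hj01 : j = 0 ∨ j = 1 := by omega
        have hji : j = i % 2 := by
          rw [hcast2 i] at hgε
          have hi01 : i % 2 = 0 ∨ i % 2 = 1 := by omega
          rcases hj01 with hj' | hj' <;> rcases hi01 with hi' | hi'
          · omega
          · rw [hj', hi'] at hgε
            exact absurd hgε (by decide)
          · rw [hj', hi'] at hgε
            exact absurd hgε (by decide)
          · omega
        refine Finset.mem_image.mpr ⟨i, Finset.mem_range.mpr hi, ?_⟩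
        rw [hpowc_p, hji]
  rcases hm_cases with h | h | h | h
  · exact hbranch1 (Or.inl h)
  · exact hbranch1 (Or.inr h)
  · exact hbranch2 (Or.inl h)
  · exact hbranch2 (Or.inr h)
end

section
/- Let C be an HFP(2t,2,2_u)-code of length 4t with t > 1, with normalized permutations π_a = (1,2,…,2t)(2t+1,2t+2,…,4t) and π_b = (1,2t+1)(2,2t+2)⋯(2t,4t). Then the vector (e_{2t},u_{2t}) does not belong to the kernel K(C). -/
open Finset

section Aux
variable {n : ℕ}

lemma vec_add_self (x : Vec n) : x + x = 0 := by
  funext i; exact CharTwo.add_self_eq_zero _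

lemma permAct_one' (x : Vec n) : permAct (1 : Equiv.Perm (Fin n)) x = x := rfl

lemma permAct_mul' (σ τ : Equiv.Perm (Fin n)) (x : Vec n) :
    permAct (σ * τ) x = permAct σ (permAct τ x) := by
  funext i; simp [permAct, mul_inv_rev]

lemma permAct_add' (σ : Equiv.Perm (Fin n)) (x y : Vec n) :
    permAct σ (x + y) = permAct σ x + permAct σ y := rfl

lemma permAct_zero' (σ : Equiv.Perm (Fin n)) : permAct σ (0 : Vec n) = 0 := rfl

lemma permAct_allOne' (σ : Equiv.Perm (Fin n)) : permAct σ (allOne n) = allOne n := rfl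

lemma permAct_eq_of (σ : Equiv.Perm (Fin n)) (x : Vec n) (h : ∀ c, x (σ c) = x c) :
    permAct σ x = x := by
  funext c
  show x (σ⁻¹ c) = x c
  conv_rhs => rw [← (show σ (σ⁻¹ c) = c from Equiv.apply_symm_apply σ c), h]

lemma apply_eq_of_permAct {σ : Equiv.Perm (Fin n)} {x : Vec n} (h : permAct σ x = x) :
    ∀ c, x (σ c) = x c := by
  intro c
  have := congrFun h (σ c)
  simpa [permAct] using this.symm

lemma permAct_sum' {ι : Type*} (σ : Equiv.Perm (Fin n)) (s : Finset ι) (g : ι → Vec n) :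
    permAct σ (∑ i ∈ s, g i) = ∑ i ∈ s, permAct σ (g i) := by
  funext c; simp [permAct, Finset.sum_apply]

lemma zmod2_cases : ∀ x : ZMod 2, x = 0 ∨ x = 1 := by decide

end Aux

namespace HFPCode
variable {n : ℕ} (H : HFPCode n)

lemma mul_zero'' (x : Vec n) : H.mul x 0 = x := by
  simp [HFPCode.mul, permAct_zero']

lemma zero_mul'' (x : Vec n) : H.mul 0 x = x := by
  simp [HFPCode.mul, H.π_zero, permAct_one']

lemma mul_allOne' (x : Vec n) : H.mul x (allOne n) = x + allOne n := by
  simp [HFPCode.mul, permAct_allOne']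

lemma mul_mem'' {x y : Vec n} (hx : x ∈ H.C) (hy : y ∈ H.C) : H.mul x y ∈ H.C :=
  H.mul_mem x hx y hy

lemma π_mul'' {x y : Vec n} (hx : x ∈ H.C) (hy : y ∈ H.C) :
    H.π (H.mul x y) = H.π x * H.π y := H.π_mul x hx y hy

lemma assoc {x y : Vec n} (hx : x ∈ H.C) (hy : y ∈ H.C) (w : Vec n) :
    H.mul (H.mul x y) w = H.mul x (H.mul y w) := by
  show (x + permAct (H.π x) y) + permAct (H.π (H.mul x y)) w
      = x + permAct (H.π x) (y + permAct (H.π y) w)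
  rw [H.π_mul'' hx hy, permAct_mul', permAct_add', add_assoc]

lemma pow_mem {x : Vec n} (hx : x ∈ H.C) (m : ℕ) : H.pow x m ∈ H.C := by
  induction m with
  | zero => exact H.zero_mem
  | succ m ih => exact H.mul_mem'' hx ih

lemma π_pow {x : Vec n} (hx : x ∈ H.C) (m : ℕ) : H.π (H.pow x m) = (H.π x) ^ m := by
  induction m with
  | zero => simpa [HFPCode.pow] using H.π_zero
  | succ m ih =>
      show H.π (H.mul x (H.pow x m)) = _
      rw [H.π_mul'' hx (H.pow_mem hx m), ih, pow_succ']

lemma pow_add' {x : Vec n} (hx : x ∈ H.C) (m k : ℕ) :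
    H.pow x (m + k) = H.mul (H.pow x m) (H.pow x k) := by
  induction m with
  | zero => simp [HFPCode.pow, H.zero_mul'']
  | succ m ih =>
      have : m + 1 + k = (m + k) + 1 := by omega
      rw [this]
      show H.mul x (H.pow x (m + k)) = _
      rw [ih]
      rw [← H.assoc hx (H.pow_mem hx m) (H.pow x k)]
      rfl

lemma pow_mod {x : Vec n} (hx : x ∈ H.C) {m : ℕ} (hm : H.pow x m = 0) (j : ℕ) :
    H.pow x j = H.pow x (j % m) := by
  have hmq : ∀ q : ℕ, H.pow x (m * q) = 0 := by
    intro q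
    induction q with
    | zero => rfl
    | succ q ih =>
        have : m * (q + 1) = m * q + m := by ring
        rw [this, H.pow_add' hx, ih, hm, H.zero_mul'']
  conv_lhs => rw [← Nat.div_add_mod j m]
  rw [H.pow_add' hx, hmq, H.zero_mul'']

lemma sq_mul {x y : Vec n} (hx : x ∈ H.C) (hy : y ∈ H.C)
    (hcomm : ∀ x ∈ H.C, ∀ y ∈ H.C, H.mul x y = H.mul y x) :
    H.mul (H.mul x y) (H.mul x y) = H.mul (H.mul x x) (H.mul y y) := by
  rw [H.assoc hx hy, ← H.assoc hy hx, hcomm y hy x hx, H.assoc hx hy, ← H.assoc hx hx]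

lemma pow_eval {x : Vec n} (hx : x ∈ H.C) (m : ℕ) :
    H.pow x m = ∑ l ∈ Finset.range m, permAct ((H.π x) ^ l) x := by
  induction m with
  | zero => simp [HFPCode.pow]
  | succ m ih =>
      show H.mul x (H.pow x m) = _
      rw [ih]
      show x + permAct (H.π x) _ = _
      rw [permAct_sum']
      rw [Finset.sum_range_succ', pow_zero, permAct_one', add_comm]
      congr 1


end HFPCode

/-- In an HFP(2t,2,2_u)-code of length `4t`, `t > 1`, with normalized permutations,
the vector `(e_{2t},u_{2t})` is not in the kernel. -/
theorem euVec_not_mem_kernel (t : ℕ) (ht : 1 < t) (H : HFPCode (4 * t)) (a b : Vec (4 * t))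
    (hC : HFPCode.Is2t22u t H a b)
    (hπa : HFPCode.NormPiA t H a) (hπb : HFPCode.NormPiB t H b) :
    euVec t ∉ kerSet H.C := by
  intro hker
  have h2t : 0 < 2*t := by omega
  obtain ⟨ha, hb, hcomm, ha2t, haord, hb2, hbne, hune, hindep, hgen⟩ := hC
  have hker' : (fun x => euVec t + x) '' H.C = H.C := hker
  have hzC : euVec t ∈ H.C := by
    have hm : euVec t + 0 ∈ (fun x => euVec t + x) '' H.C := ⟨0, H.zero_mem, rfl⟩
    rw [hker'] at hm
    simpa using hm
  have huC : allOne (4*t) ∈ H.C := H.allOne_mem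
  have pow1 : ∀ x : Vec (4*t), H.pow x 1 = x := fun x => H.mul_zero'' x
  have huu : H.mul (allOne (4*t)) (allOne (4*t)) = 0 := by
    show allOne (4*t) + permAct (H.π (allOne (4*t))) (allOne (4*t)) = 0
    rw [H.π_allOne, permAct_one', vec_add_self]
  have hu2 : H.pow (allOne (4*t)) 2 = 0 := by
    show H.mul (allOne (4*t)) (H.pow (allOne (4*t)) 1) = 0
    rw [pow1]; exact huu
  obtain ⟨i0, j0, k0, hzeq⟩ := hgen (euVec t) hzC
  rw [H.pow_mod ha ha2t i0, H.pow_mod hb hb2 j0, H.pow_mod huC hu2 k0] at hzeq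
  set i : ℕ := i0 % (2*t) with hidef
  set j : ℕ := j0 % 2 with hjdef
  set k : ℕ := k0 % 2 with hkdef
  have hilt : i < 2*t := Nat.mod_lt _ h2t
  have hk01 : k = 0 ∨ k = 1 := by omega
  have hj01 : j = 0 ∨ j = 1 := by omega
  have hπV : H.π (H.pow (allOne (4*t)) k) = 1 := by
    rcases hk01 with h | h <;> rw [h]
    · exact H.π_zero
    · rw [pow1]; exact H.π_allOne
  have πz : H.π (euVec t) = (H.π a)^i * (H.π b)^j := by
    rw [hzeq, H.π_mul'' (H.mul_mem'' (H.pow_mem ha i) (H.pow_mem hb j)) (H.pow_mem huC k),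
      H.π_mul'' (H.pow_mem ha i) (H.pow_mem hb j), hπV, mul_one, H.π_pow ha, H.π_pow hb]
  -- index formula for powers of (π a)
  have piA_pow_val : ∀ (m : ℕ) (c : Fin (4*t)), (((H.π a)^m) c).val =
      if c.val < 2*t then (c.val + m) % (2*t) else 2*t + (c.val + m) % (2*t) := by
    intro m
    induction m with
    | zero =>
        intro c
        have hc4 := c.isLt
        simp only [pow_zero, Equiv.Perm.coe_one, id_eq, Nat.add_zero]
        by_cases hlt : c.val < 2*t
        · rw [if_pos hlt, Nat.mod_eq_of_lt hlt]
        · rw [if_neg hlt, Nat.mod_eq_sub_mod (by omega), Nat.mod_eq_of_lt (by omega)]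
          omega
    | succ m ih =>
        intro c
        have hstep : ((H.π a)^(m+1)) c = ((H.π a)^m) ((H.π a) c) := by
          rw [pow_succ, Equiv.Perm.mul_apply]
        rw [hstep, ih ((H.π a) c)]
        have hc := hπa c
        by_cases hlt : c.val < 2*t
        · rw [if_pos hlt] at hc
          have hdlt : ((H.π a) c).val < 2*t := by rw [hc]; exact Nat.mod_lt _ h2t
          rw [if_pos hdlt, if_pos hlt, hc, Nat.mod_add_mod]
          congr 1; omega
        · rw [if_neg hlt] at hc
          have hdlt : ¬ ((H.π a) c).val < 2*t := by omega
          rw [if_neg hdlt, if_neg hlt, hc]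
          congr 1
          rw [Nat.add_assoc, Nat.add_mod_left, Nat.mod_add_mod]
          congr 1; omega
  have hπa2t : (H.π a)^(2*t) = 1 := by
    have hp := H.π_pow ha (2*t)
    rw [ha2t, H.π_zero] at hp
    exact hp.symm
  have inv_pow : ∀ m, m ≤ 2*t → ((H.π a)^m)⁻¹ = (H.π a)^(2*t - m) := by
    intro m hm
    apply inv_eq_of_mul_eq_one_right
    rw [← pow_add, Nat.add_sub_cancel' hm, hπa2t]
  have hzπa : ∀ m : ℕ, permAct ((H.π a)^m) (euVec t) = euVec t := by
    intro m
    apply permAct_eq_of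
    intro c
    have hv := piA_pow_val m c
    by_cases hlt : c.val < 2*t
    · rw [if_pos hlt] at hv
      have h1 : (((H.π a)^m) c).val < 2*t := by rw [hv]; exact Nat.mod_lt _ h2t
      simp [euVec, h1, hlt]
    · rw [if_neg hlt] at hv
      have h1 : ¬ (((H.π a)^m) c).val < 2*t := by omega
      simp [euVec, h1, hlt]
  have hπb_invol : H.π b * H.π b = 1 := by
    apply Equiv.ext
    intro c
    rw [Equiv.Perm.mul_apply]
    apply Fin.ext
    rw [hπb ((H.π b) c), hπb c, Nat.mod_add_mod]
    show (c.val + 2*t + 2*t) % (4*t) = (c.val : ℕ)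
    have : c.val + 2*t + 2*t = c.val + 4*t := by omega
    rw [this, Nat.add_mod_right, Nat.mod_eq_of_lt c.isLt]
  have hπb_inv : (H.π b)⁻¹ = H.π b := inv_eq_of_mul_eq_one_right hπb_invol
  have hone : (1 : ZMod 2) + 1 = 0 := by decide
  have hπbz : permAct (H.π b) (euVec t) = euVec t + allOne (4*t) := by
    funext c
    show euVec t ((H.π b)⁻¹ c) = euVec t c + allOne (4*t) c
    rw [hπb_inv]
    have hc4 := c.isLt
    have hv := hπb c
    by_cases hlt : c.val < 2*t
    · have h1 : (H.π b c).val = c.val + 2*t := by rw [hv, Nat.mod_eq_of_lt (by omega)]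
      have h2 : ¬ (H.π b c).val < 2*t := by omega
      simp [euVec, allOne, h2, hlt]
    · have h1 : (H.π b c).val = c.val - 2*t := by
        rw [hv, Nat.mod_eq_sub_mod (by omega), Nat.mod_eq_of_lt (by omega)]
        omega
      have h2 : (H.π b c).val < 2*t := by omega
      simp [euVec, allOne, h2, hlt, hone]
  have hVV : H.mul (H.pow (allOne (4*t)) k) (H.pow (allOne (4*t)) k) = 0 := by
    rcases hk01 with h | h <;> rw [h]
    · exact H.zero_mul'' 0
    · rw [pow1]; exact huu
  rcases hj01 with hj0 | hj1
  · -- case j = 0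
    rw [hj0] at hzeq πz
    rw [show H.pow b 0 = (0 : Vec (4*t)) from rfl, H.mul_zero''] at hzeq
    rw [pow_zero, mul_one] at πz
    have hπzz : permAct (H.π (euVec t)) (euVec t) = euVec t := by
      rw [πz]; exact hzπa i
    have hzz : H.mul (euVec t) (euVec t) = 0 := by
      show euVec t + permAct (H.π (euVec t)) (euVec t) = 0
      rw [hπzz, vec_add_self]
    have hii : H.pow a (i+i) = 0 := by
      have h1 : H.mul (euVec t) (euVec t) = H.pow a (i+i) := by
        conv_lhs => rw [hzeq]
        rw [H.sq_mul (H.pow_mem ha i) (H.pow_mem huC k) hcomm, hVV,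
          H.mul_zero'', ← H.pow_add' ha]
      rw [← h1, hzz]
    have hit : i = 0 ∨ i = t := by
      by_cases h0 : i + i < 2*t
      · left
        by_contra hne
        exact haord (i+i) (by omega) h0 hii
      · right
        by_contra hne
        have hm : (i+i) % (2*t) = i+i-2*t := by
          rw [Nat.mod_eq_sub_mod (by omega), Nat.mod_eq_of_lt (by omega)]
        have h2 : H.pow a (i+i-2*t) = 0 := by
          have h3 := H.pow_mod ha ha2t (i+i)
          rw [hii, hm] at h3
          exact h3.symm
        exact haord (i+i-2*t) (by omega) (by omega) h2
    rcases hit with hi0 | hit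
    · -- i = 0 : z = pow u k, impossible
      rw [hi0] at hzeq
      rw [show H.pow a 0 = (0 : Vec (4*t)) from rfl, H.zero_mul''] at hzeq
      rcases hk01 with h | h <;> rw [h] at hzeq
      · have := congrFun hzeq ⟨2*t, by omega⟩
        simp [euVec, HFPCode.pow] at this
      · rw [pow1] at hzeq
        have := congrFun hzeq ⟨0, by omega⟩
        simp [euVec, allOne, show (0:ℕ) < 2*t from by omega] at this
    · -- i = t : the main case
      rw [hit] at hzeq πz
      have hvz : permAct (H.π a) (H.pow (allOne (4*t)) k) = H.pow (allOne (4*t)) k := by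
        rcases hk01 with h | h <;> rw [h]
        · exact permAct_zero' _
        · rw [pow1]; exact permAct_allOne' _
      have hat : H.pow a t = euVec t + H.pow (allOne (4*t)) k := by
        have h1 : euVec t = H.pow a t + H.pow (allOne (4*t)) k := by
          rw [hzeq]
          rcases hk01 with h | h <;> rw [h]
          · rw [show H.pow (allOne (4*t)) 0 = (0 : Vec (4*t)) from rfl, H.mul_zero'', add_zero]
          · rw [pow1, H.mul_allOne']
        rw [h1, add_assoc, vec_add_self, add_zero]
      -- periodicity of a
      have hπa1z : permAct (H.π a) (euVec t) = euVec t := by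
        have h1 := hzπa 1
        rwa [pow_one] at h1
      have e1 : H.mul a (euVec t) = a + euVec t := by
        show a + permAct (H.π a) (euVec t) = a + euVec t
        rw [hπa1z]
      have e2 : H.mul (euVec t) a = euVec t + permAct ((H.π a)^t) a := by
        show euVec t + permAct (H.π (euVec t)) a = _
        rw [πz]
      have F1 : permAct ((H.π a)^t) a = a := by
        have h1 : euVec t + a = euVec t + permAct ((H.π a)^t) a := by
          rw [← e2, ← hcomm a ha (euVec t) hzC, e1, add_comm]
        exact (add_left_cancel h1).symm
      have F1' : ∀ c, a (((H.π a)^t) c) = a c := apply_eq_of_permAct F1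
      -- the function f
      set f : ℕ → ZMod 2 := fun r => if h : r < 4*t then a ⟨r, h⟩ else 0 with hfdef
      have hfa : ∀ c : Fin (4*t), f c.val = a c := by
        intro c
        rw [hfdef]
        simp only [c.isLt, dif_pos, Fin.eta]
      have Pf1 : ∀ m, m < t → f (m + t) = f m := by
        intro m hm
        have hval : (((H.π a)^t) ⟨m, by omega⟩).val = m + t := by
          rw [piA_pow_val]
          simp only [show m < 2*t from by omega, if_pos]
          exact Nat.mod_eq_of_lt (by omega)
        calc f (m+t) = a ⟨m+t, by omega⟩ := by rw [hfdef]; simp only [show m+t < 4*t from by omega, dif_pos]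
          _ = a (((H.π a)^t) ⟨m, by omega⟩) := by congr 1; exact (Fin.ext hval).symm
          _ = a ⟨m, by omega⟩ := F1' _
          _ = f m := by rw [hfdef]; simp only [show m < 4*t from by omega, dif_pos]
      have Pf2 : ∀ m, m < t → f (2*t + m + t) = f (2*t + m) := by
        intro m hm
        have hval : (((H.π a)^t) ⟨2*t + m, by omega⟩).val = 2*t + m + t := by
          rw [piA_pow_val]
          rw [if_neg (by omega : ¬ (2*t + m < 2*t))]
          have h1 : 2*t + m + t = 2*t + (m + t) := by omega
          rw [h1, Nat.add_mod_left, Nat.mod_eq_of_lt (by omega)]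
        calc f (2*t+m+t) = a ⟨2*t+m+t, by omega⟩ := by rw [hfdef]; simp only [show 2*t+m+t < 4*t from by omega, dif_pos]
          _ = a (((H.π a)^t) ⟨2*t+m, by omega⟩) := by congr 1; exact (Fin.ext hval).symm
          _ = a ⟨2*t+m, by omega⟩ := F1' _
          _ = f (2*t+m) := by rw [hfdef]; simp only [show 2*t+m < 4*t from by omega, dif_pos]
      -- evaluation of a^t at two coordinates
      have hpe := H.pow_eval ha t
      have hterm1 : ∀ l ∈ Finset.range t, (permAct ((H.π a)^l) a) (⟨t-1, by omega⟩ : Fin (4*t))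
          = f (t - 1 - l) := by
        intro l hl
        have hlt := Finset.mem_range.mp hl
        show a (((H.π a)^l)⁻¹ ⟨t-1, by omega⟩) = _
        rw [inv_pow l (by omega)]
        have hval : (((H.π a)^(2*t-l)) (⟨t-1, by omega⟩ : Fin (4*t))).val = t - 1 - l := by
          rw [piA_pow_val]
          simp only [show t-1 < 2*t from by omega, if_pos]
          have h1 : t-1 + (2*t-l) = 2*t + (t-1-l) := by omega
          rw [h1, Nat.add_mod_left, Nat.mod_eq_of_lt (by omega)]
        rw [← hfa (((H.π a)^(2*t-l)) ⟨t-1, by omega⟩), hval]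
      have hterm2 : ∀ l ∈ Finset.range t, (permAct ((H.π a)^l) a) (⟨3*t-1, by omega⟩ : Fin (4*t))
          = f (2*t + (t - 1 - l)) := by
        intro l hl
        have hlt := Finset.mem_range.mp hl
        show a (((H.π a)^l)⁻¹ ⟨3*t-1, by omega⟩) = _
        rw [inv_pow l (by omega)]
        have hval : (((H.π a)^(2*t-l)) (⟨3*t-1, by omega⟩ : Fin (4*t))).val = 2*t + (t - 1 - l) := by
          rw [piA_pow_val]
          rw [if_neg (by omega : ¬ (3*t-1 < 2*t))]
          have h1 : 3*t-1 + (2*t-l) = 2*t + (2*t + (t-1-l)) := by omega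
          rw [h1, Nat.add_mod_left, Nat.add_mod_left, Nat.mod_eq_of_lt (by omega)]
        rw [← hfa (((H.π a)^(2*t-l)) ⟨3*t-1, by omega⟩), hval]
      have hS1 : (H.pow a t) (⟨t-1, by omega⟩ : Fin (4*t)) = ∑ r ∈ Finset.range t, f r := by
        rw [hpe, Finset.sum_apply, Finset.sum_congr rfl hterm1]
        exact Finset.sum_range_reflect f t
      have hS2 : (H.pow a t) (⟨3*t-1, by omega⟩ : Fin (4*t)) = ∑ r ∈ Finset.range t, f (2*t + r) := by
        rw [hpe, Finset.sum_apply, Finset.sum_congr rfl hterm2]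
        exact Finset.sum_range_reflect (fun r => f (2*t + r)) t
      have hw : H.pow (allOne (4*t)) k (⟨t-1, by omega⟩ : Fin (4*t))
          = H.pow (allOne (4*t)) k (⟨3*t-1, by omega⟩ : Fin (4*t)) := by
        rcases hk01 with h | h <;> rw [h]
        · rfl
        · rw [pow1]; rfl
      have hMain : (∑ r ∈ Finset.range t, f r) + (∑ r ∈ Finset.range t, f (2*t+r)) = 1 := by
        have h1 := congrFun hat (⟨t-1, by omega⟩ : Fin (4*t))
        have h2 := congrFun hat (⟨3*t-1, by omega⟩ : Fin (4*t))
        rw [hS1] at h1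
        rw [hS2] at h2
        have hz1 : euVec t (⟨t-1, by omega⟩ : Fin (4*t)) = 0 := by
          simp [euVec, show t-1 < 2*t from by omega]
        have hz2 : euVec t (⟨3*t-1, by omega⟩ : Fin (4*t)) = 1 := by
          simp [euVec, show ¬ (3*t-1 < 2*t) from by omega]
        rw [Pi.add_apply, hz1, zero_add] at h1
        rw [Pi.add_apply, hz2] at h2
        rw [h1, h2, ← hw]
        have hfin : ∀ x : ZMod 2, x + (1 + x) = 1 := by decide
        exact hfin _
      -- counting setup
      set e : ℕ → ℕ := fun r => if f r = 1 then 1 else 0 with hedef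
      have he01 : ∀ r, e r = 0 ∨ e r = 1 := by
        intro r; rw [hedef]; dsimp only; split <;> simp
      have hfe : ∀ r, f r = ((e r : ℕ) : ZMod 2) := by
        intro r
        rcases zmod2_cases (f r) with h | h <;> rw [hedef] <;> dsimp only <;> rw [h] <;> simp
      have hee : ∀ r s : ℕ, f r = f s → e r = e s := by
        intro r s h; rw [hedef]; dsimp only; rw [h]
      -- a is not 0, u, z, z+u
      have hane0 : a ≠ 0 := by
        have h1 := haord 1 (by omega) (by omega)
        rwa [pow1] at h1
      have haneu : a ≠ allOne (4*t) := by
        intro h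
        have h3 : H.mul (H.mul (H.pow a 1) (H.pow b 0)) (H.pow (allOne (4*t)) 1) = 0 := by
          rw [pow1, pow1]
          show H.mul (H.mul a 0) (allOne (4*t)) = 0
          rw [H.mul_zero'', h]
          exact huu
        have h4 := hindep 1 0 1 (by omega) (by omega) (by omega) h3
        exact absurd h4.1 (by omega)
      have hzwa : ∀ w : Vec (4*t), w = 0 ∨ w = allOne (4*t) → a ≠ euVec t + w := by
        intro w hw heq
        have hperm : permAct (H.π a) (H.pow a t) = H.pow a t := by
          rw [hat, permAct_add', hπa1z, hvz]
        have hpt1 : H.pow a (t+1) = a + H.pow a t := by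
          show a + permAct (H.π a) (H.pow a t) = _
          rw [hperm]
        have hav : H.pow a (t+1) = w + H.pow (allOne (4*t)) k := by
          rw [hpt1, hat, heq, add_add_add_comm, vec_add_self, zero_add]
        have hW : w + H.pow (allOne (4*t)) k = 0 ∨ w + H.pow (allOne (4*t)) k = allOne (4*t) := by
          rcases hw with hw | hw <;> rcases hk01 with hk | hk <;> rw [hw, hk]
          · left; rw [show H.pow (allOne (4*t)) 0 = (0 : Vec (4*t)) from rfl, add_zero]
          · right; rw [pow1, zero_add]
          · right; rw [show H.pow (allOne (4*t)) 0 = (0 : Vec (4*t)) from rfl, add_zero]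
          · left; rw [pow1, vec_add_self]
        rcases hW with hW | hW <;> rw [hW] at hav
        · exact haord (t+1) (by omega) (by omega) hav
        · have h3 : H.mul (H.mul (H.pow a (t+1)) (H.pow b 0)) (H.pow (allOne (4*t)) 1) = 0 := by
            rw [pow1 (allOne (4*t))]
            show H.mul (H.mul (H.pow a (t+1)) 0) (allOne (4*t)) = 0
            rw [H.mul_zero'', hav]
            exact huu
          have h4 := hindep (t+1) 0 1 (by omega) (by omega) (by omega) h3
          exact absurd h4.2.2 (by omega)
      -- hamming distances
      have hd0 : hammingDist (0 : Vec (4*t)) a = 2*t := by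
        have h1 := H.dist_eq 0 H.zero_mem a ha (Ne.symm hane0) (by rw [zero_add]; exact haneu)
        omega
      have hdz : hammingDist (euVec t) a = 2*t := by
        have hza : euVec t ≠ a := by
          intro h
          exact hzwa 0 (Or.inl rfl) (by rw [add_zero, h])
        have h1 := H.dist_eq (euVec t) hzC a ha hza (hzwa (allOne (4*t)) (Or.inr rfl))
        omega
      have hcard : ∀ (x : Vec (4*t)) (g : ℕ → ℕ),
          (∀ i : Fin (4*t), (if x i ≠ a i then 1 else 0) = g i.val) →
          hammingDist x a = ∑ r ∈ Finset.range (4*t), g r := by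
        intro x g hg
        rw [hammingDist, Finset.card_filter, ← Fin.sum_univ_eq_sum_range g (4*t)]
        exact Finset.sum_congr rfl fun i _ => hg i
      have hd0' : ∑ r ∈ Finset.range (4*t), e r = 2*t := by
        have h1 := hcard 0 e (by
          intro i
          rcases zmod2_cases (a i) with h | h <;>
            simp [hedef, hfa, h])
        rw [← h1]
        exact hd0
      have hg2 : ∀ i : Fin (4*t), (if euVec t i ≠ a i then 1 else 0)
          = (fun r => if r < 2*t then e r else 1 - e r) i.val := by
        intro i
        by_cases hlt : i.val < 2*t
        · rcases zmod2_cases (a i) with h | h <;> simp [euVec, hedef, hfa, h, hlt]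
        · rcases zmod2_cases (a i) with h | h <;> simp [euVec, hedef, hfa, h, hlt]
      have hdz' : (∑ r ∈ Finset.range (2*t), e r)
          + (∑ r ∈ Finset.Ico (2*t) (4*t), (1 - e r)) = 2*t := by
        have h1 := hcard (euVec t) (fun r => if r < 2*t then e r else 1 - e r) hg2
        rw [hdz] at h1
        calc (∑ r ∈ Finset.range (2*t), e r) + (∑ r ∈ Finset.Ico (2*t) (4*t), (1 - e r))
            = (∑ r ∈ Finset.Ico 0 (2*t), (if r < 2*t then e r else 1 - e r))
              + (∑ r ∈ Finset.Ico (2*t) (4*t), (if r < 2*t then e r else 1 - e r)) := by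
              congr 1
              · rw [← Finset.range_eq_Ico]
                exact Finset.sum_congr rfl fun r hr => (if_pos (Finset.mem_range.mp hr)).symm
              · exact Finset.sum_congr rfl fun r hr =>
                  (if_neg (by have := Finset.mem_Ico.mp hr; omega)).symm
          _ = ∑ r ∈ Finset.Ico 0 (4*t), (if r < 2*t then e r else 1 - e r) :=
              Finset.sum_Ico_consecutive _ (by omega) (by omega)
          _ = 2*t := by rw [← Finset.range_eq_Ico]; exact h1.symm
      -- splitting sums
      have hsp1 : ∑ r ∈ Finset.range (4*t), e r
          = ∑ r ∈ Finset.range (2*t), e r + ∑ r ∈ Finset.Ico (2*t) (4*t), e r := by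
        rw [Finset.range_eq_Ico, Finset.range_eq_Ico,
          Finset.sum_Ico_consecutive e (by omega : (0:ℕ) ≤ 2*t) (by omega : 2*t ≤ 4*t)]
      have hsp2 : ∑ r ∈ Finset.Ico (2*t) (4*t), e r
          = ∑ r ∈ Finset.Ico (2*t) (3*t), e r + ∑ r ∈ Finset.Ico (3*t) (4*t), e r := by
        rw [Finset.sum_Ico_consecutive e (by omega : 2*t ≤ 3*t) (by omega : 3*t ≤ 4*t)]
      have hsp3 : ∑ r ∈ Finset.range (2*t), e r
          = ∑ r ∈ Finset.range t, e r + ∑ r ∈ Finset.Ico t (2*t), e r := by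
        rw [Finset.range_eq_Ico, Finset.range_eq_Ico,
          Finset.sum_Ico_consecutive e (by omega : (0:ℕ) ≤ t) (by omega : t ≤ 2*t)]
      have hsp4 : ∑ r ∈ Finset.Ico (2*t) (4*t), (1 - e r)
          = ∑ r ∈ Finset.Ico (2*t) (3*t), (1 - e r) + ∑ r ∈ Finset.Ico (3*t) (4*t), (1 - e r) := by
        rw [Finset.sum_Ico_consecutive _ (by omega : 2*t ≤ 3*t) (by omega : 3*t ≤ 4*t)]
      -- periodic sums
      have hn2 : ∑ r ∈ Finset.Ico t (2*t), e r = ∑ r ∈ Finset.range t, e r := by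
        rw [Finset.sum_Ico_eq_sum_range, show 2*t - t = t from by omega]
        exact Finset.sum_congr rfl fun r hr => hee (t + r) r (by
          rw [show t + r = r + t from by omega]
          exact Pf1 r (Finset.mem_range.mp hr))
      have hn4 : ∑ r ∈ Finset.Ico (3*t) (4*t), e r = ∑ r ∈ Finset.Ico (2*t) (3*t), e r := by
        rw [Finset.sum_Ico_eq_sum_range, Finset.sum_Ico_eq_sum_range,
          show 4*t - 3*t = t from by omega, show 3*t - 2*t = t from by omega]
        exact Finset.sum_congr rfl fun r hr => hee (3*t + r) (2*t + r) (by
          rw [show 3*t + r = 2*t + r + t from by omega]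
          exact Pf2 r (Finset.mem_range.mp hr))
      have hcompl : ∀ m1 m2 : ℕ,
          (∑ r ∈ Finset.Ico m1 m2, (1 - e r)) + (∑ r ∈ Finset.Ico m1 m2, e r) = m2 - m1 := by
        intro m1 m2
        rw [← Finset.sum_add_distrib]
        have h1 : ∀ r ∈ Finset.Ico m1 m2, (1 - e r) + e r = 1 := by
          intro r _; rcases he01 r with h | h <;> rw [h]
        rw [Finset.sum_congr rfl h1, Finset.sum_const, Nat.card_Ico, smul_eq_mul, mul_one]
      have hc1 := hcompl (2*t) (3*t)
      have hc2 := hcompl (3*t) (4*t)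
      have hAC : ∑ r ∈ Finset.range t, e r = ∑ r ∈ Finset.Ico (2*t) (3*t), e r := by omega
      -- casts
      have hcast1 : (∑ r ∈ Finset.range t, f r) = ((∑ r ∈ Finset.range t, e r : ℕ) : ZMod 2) := by
        rw [Nat.cast_sum]
        exact Finset.sum_congr rfl fun r _ => hfe r
      have hcast2 : (∑ r ∈ Finset.range t, f (2*t + r))
          = ((∑ r ∈ Finset.Ico (2*t) (3*t), e r : ℕ) : ZMod 2) := by
        rw [Finset.sum_Ico_eq_sum_range, show 3*t - 2*t = t from by omega, Nat.cast_sum]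
        exact Finset.sum_congr rfl fun r _ => hfe (2*t + r)
      rw [hcast1, hcast2, ← hAC, CharTwo.add_self_eq_zero] at hMain
      exact absurd hMain (by decide)
  · -- case j = 1 : contradiction via a^{2i} = u
    rw [hj1] at hzeq πz
    rw [pow1 b] at hzeq
    have hπzz : permAct (H.π (euVec t)) (euVec t) = euVec t + allOne (4*t) := by
      rw [πz, pow_one, permAct_mul', hπbz, permAct_add', hzπa i, permAct_allOne']
    have hzz : H.mul (euVec t) (euVec t) = allOne (4*t) := by
      show euVec t + permAct (H.π (euVec t)) (euVec t) = _
      rw [hπzz, ← add_assoc, vec_add_self, zero_add]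
    have hbb : H.mul b b = 0 := by
      have h1 : H.pow b 2 = H.mul b b := by
        show H.mul b (H.pow b 1) = _
        rw [pow1]
      rw [← h1, hb2]
    have h1 : H.mul (euVec t) (euVec t) = H.pow a (i+i) := by
      conv_lhs => rw [hzeq]
      rw [H.sq_mul (H.mul_mem'' (H.pow_mem ha i) hb) (H.pow_mem huC k) hcomm, hVV,
        H.mul_zero'', H.sq_mul (H.pow_mem ha i) hb hcomm, hbb, H.mul_zero'', ← H.pow_add' ha]
    have h2 : H.pow a ((i+i) % (2*t)) = allOne (4*t) := by
      rw [← H.pow_mod ha ha2t, ← h1, hzz]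
    have h3 : H.mul (H.mul (H.pow a ((i+i) % (2*t))) (H.pow b 0)) (H.pow (allOne (4*t)) 1) = 0 := by
      rw [h2, pow1]
      show H.mul (H.mul (allOne (4*t)) 0) (allOne (4*t)) = 0
      rw [H.mul_zero'']
      exact huu
    have h4 := hindep _ 0 1 (Nat.mod_lt _ h2t) (by omega) (by omega) h3
    exact absurd h4.2.2 (by omega)
end
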